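/- arXiv:1402.5547 — 11 statements merged into one kernel-verified Lean document; each statement's English description precedes it below -/
import Mathlib

section
/- If k balls are drawn with replacement from an urn containing n balls of m colours with x_i balls of colour i, then the joint distribution of the counts of distinct balls of each colour drawn satisfies P(Y_1(k)=j_1,...,Y_m(k)=j_m) = (1/n^k) · binom(x_1,j_1)···binom(x_m,j_m) · Sur(k, j_1+...+j_m), where Sur(k,r) is the number of surjections from a k-element set onto an r-element set. -/
open Finset

/-- The number of surjective maps from `Fin k` onto `Fin r`. -/
noncomputable def Sur (k r : ℕ) : ℕ :=
  Nat.card {f : Fin k → Fin r // Function.Surjective f}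

/-- Functions with a fixed image `S` of cardinality `r` are in bijection with
surjections onto `Fin r`. -/
lemma card_image_eq_sur {n k r : ℕ} (S : Finset (Fin n)) (hS : S.card = r) :
    Nat.card {f : Fin k → Fin n // Finset.image f Finset.univ = S} = Sur k r := by
  apply Nat.card_congr
  let e : {b // b ∈ S} ≃ Fin r := S.equivFin.trans (finCongr hS)
  have hmem : ∀ (f : {f : Fin k → Fin n // Finset.image f Finset.univ = S}) (a : Fin k),
      f.1 a ∈ S := by
    rintro ⟨f, hf⟩ a
    show f a ∈ S
    rw [← hf]
    exact Finset.mem_image_of_mem f (mem_univ a)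
  refine
    { toFun := fun f => ⟨fun a => e ⟨f.1 a, hmem f a⟩, ?_⟩
      invFun := fun g => ⟨fun a => (e.symm (g.1 a) : Fin n), ?_⟩
      left_inv := ?_, right_inv := ?_ }
  · intro y
    have hy : (e.symm y : Fin n) ∈ Finset.image f.1 Finset.univ := by
      rw [f.2]; exact (e.symm y).2
    obtain ⟨a, -, ha⟩ := Finset.mem_image.mp hy
    refine ⟨a, ?_⟩
    have h2 : (⟨f.1 a, hmem f a⟩ : {b // b ∈ S}) = e.symm y := Subtype.ext ha
    change e ⟨f.1 a, hmem f a⟩ = y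
    rw [h2, Equiv.apply_symm_apply]
  · apply Finset.Subset.antisymm
    · intro b hb
      obtain ⟨a, -, ha⟩ := Finset.mem_image.mp hb
      rw [← ha]
      exact (e.symm (g.1 a)).2
    · intro b hb
      obtain ⟨a, ha⟩ := g.2 (e ⟨b, hb⟩)
      refine Finset.mem_image.mpr ⟨a, mem_univ a, ?_⟩
      rw [ha, Equiv.symm_apply_apply]
  · rintro ⟨f, hf⟩
    apply Subtype.ext
    funext a
    simp
  · rintro ⟨g, hg⟩
    apply Subtype.ext
    funext a
    simp

/-- Sampling `k` balls with replacement from an urn of `n` balls with colour map `c`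
(colour `i` having `x i` balls): the probability that exactly `j i` distinct balls of
colour `i` have been seen equals `(1/n^k) · ∏ binom(x i, j i) · Sur(k, ∑ j i)`. -/
theorem with_replacement_distinct_joint_distribution
    (n m k : ℕ) (x j : Fin m → ℕ) (c : Fin n → Fin m)
    (hx : ∀ i, (Finset.univ.filter (fun b : Fin n => c b = i)).card = x i)
    (hn : ∑ i, x i = n) :
    (Nat.card {f : Fin k → Fin n // ∀ i : Fin m,
        ((Finset.image f Finset.univ).filter (fun b : Fin n => c b = i)).card = j i} : ℚ)
      / (n ^ k : ℚ)
    = (1 / (n ^ k : ℚ)) * (∏ i, (Nat.choose (x i) (j i) : ℚ)) * (Sur k (∑ i, j i) : ℚ) := by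
  classical
  set r := ∑ i, j i with hr
  set 𝒮 : Finset (Finset (Fin n)) :=
    Finset.univ.filter
      (fun S => ∀ i, (S.filter (fun b : Fin n => c b = i)).card = j i) with h𝒮
  -- every admissible image has cardinality r
  have hcardS : ∀ S ∈ 𝒮, S.card = r := by
    intro S hS
    rw [Finset.card_eq_sum_card_fiberwise (f := c) (t := Finset.univ)
      (fun b _ => mem_univ (c b))]
    simp only [h𝒮, Finset.mem_filter] at hS
    exact Finset.sum_congr rfl fun i _ => hS.2 i
  -- the number of admissible images
  have hScard : 𝒮.card = ∏ i, (x i).choose (j i) := by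
    have hbij : 𝒮.card = (Fintype.piFinset
        (fun i => (Finset.univ.filter (fun b : Fin n => c b = i)).powersetCard (j i))).card := by
      apply Finset.card_bij' (fun S _ => fun i => S.filter (fun b : Fin n => c b = i))
        (fun T _ => Finset.univ.biUnion T)
      · intro S hS
        simp only [h𝒮, Finset.mem_filter] at hS
        rw [Fintype.mem_piFinset]
        intro i
        rw [Finset.mem_powersetCard]
        exact ⟨fun b hb => by
          simp only [Finset.mem_filter] at hb ⊢
          exact ⟨mem_univ b, hb.2⟩, hS.2 i⟩
      · intro T hT
        rw [Fintype.mem_piFinset] at hT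
        simp only [h𝒮, Finset.mem_filter, Finset.mem_univ, true_and]
        intro i
        have key : (Finset.univ.biUnion T).filter (fun b : Fin n => c b = i) = T i := by
          ext b
          simp only [Finset.mem_filter, Finset.mem_biUnion, Finset.mem_univ, true_and]
          constructor
          · rintro ⟨⟨i', hi'⟩, hc⟩
            have := (Finset.mem_powersetCard.mp (hT i')).1 hi'
            simp only [Finset.mem_filter] at this
            obtain rfl : i' = i := this.2.symm.trans hc
            exact hi'
          · intro hb
            refine ⟨⟨i, hb⟩, ?_⟩
            have := (Finset.mem_powersetCard.mp (hT i)).1 hb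
            simp only [Finset.mem_filter] at this
            exact this.2
        rw [key]
        exact (Finset.mem_powersetCard.mp (hT i)).2
      · intro S hS
        ext b
        simp only [Finset.mem_biUnion, Finset.mem_univ, true_and, Finset.mem_filter]
        exact ⟨fun ⟨i, hb, _⟩ => hb, fun hb => ⟨c b, hb, rfl⟩⟩
      · intro T hT
        rw [Fintype.mem_piFinset] at hT
        funext i
        ext b
        simp only [Finset.mem_filter, Finset.mem_biUnion, Finset.mem_univ, true_and]
        constructor
        · rintro ⟨⟨i', hi'⟩, hc⟩
          have := (Finset.mem_powersetCard.mp (hT i')).1 hi'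
          simp only [Finset.mem_filter] at this
          obtain rfl : i' = i := this.2.symm.trans hc
          exact hi'
        · intro hb
          refine ⟨⟨i, hb⟩, ?_⟩
          have := (Finset.mem_powersetCard.mp (hT i)).1 hb
          simp only [Finset.mem_filter] at this
          exact this.2
    rw [hbij, Fintype.card_piFinset]
    exact Finset.prod_congr rfl fun i _ => by
      rw [Finset.card_powersetCard, hx i]
  -- the main count
  have hN : Nat.card {f : Fin k → Fin n // ∀ i : Fin m,
      ((Finset.image f Finset.univ).filter (fun b : Fin n => c b = i)).card = j i}
      = (∏ i, (x i).choose (j i)) * Sur k r := by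
    rw [Nat.card_eq_fintype_card, Fintype.card_subtype]
    have hmap : ∀ f ∈ Finset.univ.filter (fun f : Fin k → Fin n => ∀ i : Fin m,
        ((Finset.image f Finset.univ).filter (fun b : Fin n => c b = i)).card = j i),
        Finset.image f Finset.univ ∈ 𝒮 := by
      intro f hf
      simp only [Finset.mem_filter, Finset.mem_univ, true_and] at hf
      simp only [h𝒮, Finset.mem_filter, Finset.mem_univ, true_and]
      exact hf
    rw [Finset.card_eq_sum_card_fiberwise hmap]
    have hterm : ∀ S ∈ 𝒮,
        ((Finset.univ.filter (fun f : Fin k → Fin n => ∀ i : Fin m,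
          ((Finset.image f Finset.univ).filter (fun b : Fin n => c b = i)).card = j i)).filter
          (fun f => Finset.image f Finset.univ = S)).card = Sur k r := by
      intro S hS
      have heq : (Finset.univ.filter (fun f : Fin k → Fin n => ∀ i : Fin m,
          ((Finset.image f Finset.univ).filter (fun b : Fin n => c b = i)).card = j i)).filter
          (fun f => Finset.image f Finset.univ = S)
          = Finset.univ.filter (fun f : Fin k → Fin n => Finset.image f Finset.univ = S) := by
        ext f
        simp only [Finset.mem_filter, Finset.mem_univ, true_and]
        constructor
        · rintro ⟨-, h⟩; exact h
        · intro h
          refine ⟨?_, h⟩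
          simp only [h𝒮, Finset.mem_filter] at hS
          intro i
          rw [h]
          exact hS.2 i
      rw [heq, ← Fintype.card_subtype, ← Nat.card_eq_fintype_card]
      exact card_image_eq_sur S (hcardS S hS)
    rw [Finset.sum_congr rfl hterm, Finset.sum_const, smul_eq_mul, hScard]
  rw [hN]
  push_cast
  ring
end

section
/- For drawing without replacement from an urn with configuration (x_1,...,x_m), the probability that the first r-collision time exceeds k equals (k!(n-k)!/n!) times the coefficient of t^k in the product over i of p_r(x_i, t), where p_r(x,t) = sum_{i=0}^{r-1} binom(x,i) t^i. -/
open Finset Polynomial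

/-- `p_r(x,t) = ∑_{i=0}^{r-1} binom(x,i) t^i` as a polynomial over `ℚ`. -/
noncomputable def pr (r x : ℕ) : Polynomial ℚ :=
  ∑ i ∈ Finset.range r, Polynomial.C ((Nat.choose x i : ℚ)) * Polynomial.X ^ i

lemma pr_coeff (r x j : ℕ) : (pr r x).coeff j = if j < r then (x.choose j : ℚ) else 0 := by
  simp only [pr, Polynomial.finset_sum_coeff, Polynomial.coeff_C_mul, Polynomial.coeff_X_pow,
    mul_ite, mul_one, mul_zero]
  rw [Finset.sum_ite_eq (Finset.range r) j (fun i => (x.choose i : ℚ))]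
  simp [Finset.mem_range]

/-- Number of subsets of `Fin n` with prescribed fiber counts under `c`. -/
lemma card_subsets_with_counts {n m : ℕ} (c : Fin n → Fin m) (l : Fin m → ℕ) :
    (Finset.univ.filter (fun S : Finset (Fin n) =>
        ∀ i, (S.filter (fun b => c b = i)).card = l i)).card
      = ∏ i, ((Finset.univ.filter (fun b : Fin n => c b = i)).card).choose (l i) := by
  classical
  have hcard : (Fintype.piFinset (fun i : Fin m =>
      (Finset.univ : Finset {b : Fin n // c b = i}).powersetCard (l i))).card
      = ∏ i, ((Finset.univ.filter (fun b : Fin n => c b = i)).card).choose (l i) := by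
    rw [Fintype.card_piFinset]
    refine Finset.prod_congr rfl fun i _ => ?_
    rw [Finset.card_powersetCard, Finset.card_univ, Fintype.card_subtype]
  rw [← hcard]
  refine Finset.card_bij' (fun S _ => fun i => S.subtype (fun b => c b = i))
    (fun T _ => Finset.univ.filter (fun a => (⟨a, rfl⟩ : {b : Fin n // c b = c a}) ∈ T (c a))) ?_ ?_ ?_ ?_
  · intro S hS
    rw [Finset.mem_filter] at hS
    rw [Fintype.mem_piFinset]
    intro i
    rw [Finset.mem_powersetCard]
    exact ⟨Finset.subset_univ _, by rw [Finset.card_subtype]; exact hS.2 i⟩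
  · intro T hT
    rw [Fintype.mem_piFinset] at hT
    rw [Finset.mem_filter]
    refine ⟨Finset.mem_univ _, fun i => ?_⟩
    have h1 : ((Finset.univ.filter (fun a : Fin n => (⟨a, rfl⟩ : {b : Fin n // c b = c a}) ∈ T (c a))).filter
        (fun b => c b = i)).card = (T i).card := by
      refine Finset.card_bij' (fun a ha => (⟨a, (Finset.mem_filter.mp ha).2⟩ : {b : Fin n // c b = i}))
        (fun b _ => b.val) ?_ ?_ ?_ ?_
      · intro a ha
        rw [Finset.mem_filter, Finset.mem_filter] at ha
        obtain ⟨⟨_, ha2⟩, ha3⟩ := ha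
        revert ha2
        have : c a = i := ha3
        subst this
        exact fun h => h
      · intro b hb
        rw [Finset.mem_filter, Finset.mem_filter]
        obtain ⟨a, hb'⟩ := b
        subst hb'
        exact ⟨⟨Finset.mem_univ _, hb⟩, rfl⟩
      · intro a _; rfl
      · intro b _; rfl
    rw [h1]
    have := hT i
    rw [Finset.mem_powersetCard] at this
    exact this.2
  · intro S _
    ext a
    simp only [Finset.mem_filter, Finset.mem_univ, true_and, Finset.mem_subtype]
  · intro T hT
    funext i
    ext b
    obtain ⟨a, hb⟩ := b
    subst hb
    simp only [Finset.mem_subtype, Finset.mem_filter, Finset.mem_univ, true_and]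

/-- Number of permutations sending a fixed `A` onto a fixed `S` of equal size. -/
lemma card_perm_image_eq {n : ℕ} (A S : Finset (Fin n)) (hAS : A.card = S.card) :
    (Finset.univ.filter (fun σ : Equiv.Perm (Fin n) => A.image σ = S)).card
      = (A.card).factorial * ((Finset.univ : Finset (Fin n)).card - A.card).factorial := by
  classical
  -- a permutation carrying A to S
  have hc : Fintype.card {t : Fin n // t ∈ A} = Fintype.card {t : Fin n // t ∈ S} := by
    simp only [Fintype.card_coe]
    exact hAS
  let e : {t : Fin n // t ∈ A} ≃ {t : Fin n // t ∈ S} := Fintype.equivOfCardEq hc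
  let σ0 : Equiv.Perm (Fin n) := e.extendSubtype
  have hσ0 : ∀ t, t ∈ A ↔ σ0 t ∈ S := by
    intro t
    constructor
    · intro h; exact e.extendSubtype_mem t h
    · intro h
      by_contra hA
      exact e.extendSubtype_not_mem t hA h
  have himg : A.image σ0 = S := by
    apply Finset.eq_of_subset_of_card_le
    · intro b hb
      rw [Finset.mem_image] at hb
      obtain ⟨a, ha, rfl⟩ := hb
      exact (hσ0 a).mp ha
    · rw [Finset.card_image_of_injective _ σ0.injective, hAS]
  -- bijection with the stabilizer of A
  have hbij : (Finset.univ.filter (fun σ : Equiv.Perm (Fin n) => A.image σ = S)).card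
      = (Finset.univ.filter (fun σ : Equiv.Perm (Fin n) => A.image σ = A)).card := by
    refine Finset.card_bij' (fun σ _ => σ.trans σ0.symm) (fun τ _ => τ.trans σ0) ?_ ?_ ?_ ?_
    · intro σ hσ
      rw [Finset.mem_filter] at hσ
      rw [Finset.mem_filter]
      refine ⟨Finset.mem_univ _, ?_⟩
      have : A.image (σ.trans σ0.symm) = (A.image σ).image σ0.symm := by
        rw [Finset.image_image]; rfl
      rw [this, hσ.2, ← himg, Finset.image_image, Equiv.symm_comp_self, Finset.image_id]
    · intro τ hτ
      rw [Finset.mem_filter] at hτ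
      rw [Finset.mem_filter]
      refine ⟨Finset.mem_univ _, ?_⟩
      have : A.image (τ.trans σ0) = (A.image τ).image σ0 := by
        rw [Finset.image_image]; rfl
      rw [this, hτ.2, himg]
    · intro σ _
      ext a; simp
    · intro τ _
      ext a; simp
  rw [hbij]
  -- stabilizer count via DomMulAct
  have key : ∀ σ : Equiv.Perm (Fin n),
      A.image σ = A ↔ (fun t => decide (t ∈ A)) ∘ σ = (fun t => decide (t ∈ A)) := by
    intro σ
    constructor
    · intro h
      funext t
      simp only [Function.comp_apply, decide_eq_decide]
      constructor
      · intro hσt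
        rw [← h] at hσt
        rw [Finset.mem_image] at hσt
        obtain ⟨a, ha, hEq⟩ := hσt
        rwa [← σ.injective hEq]
      · intro ht
        rw [← h]
        exact Finset.mem_image_of_mem _ ht
    · intro h
      apply Finset.eq_of_subset_of_card_le
      · intro b hb
        rw [Finset.mem_image] at hb
        obtain ⟨a, ha, rfl⟩ := hb
        have := congrFun h a
        simp only [Function.comp_apply, decide_eq_decide] at this
        exact this.mpr ha
      · rw [Finset.card_image_of_injective _ σ.injective]
  have h1 : (Finset.univ.filter (fun σ : Equiv.Perm (Fin n) => A.image σ = A)).card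
      = Fintype.card {σ : Equiv.Perm (Fin n) //
          (fun t => decide (t ∈ A)) ∘ σ = (fun t => decide (t ∈ A))} := by
    have hset : (Finset.univ.filter (fun σ : Equiv.Perm (Fin n) => A.image σ = A))
        = Finset.univ.filter (fun σ : Equiv.Perm (Fin n) =>
            (fun t => decide (t ∈ A)) ∘ σ = (fun t => decide (t ∈ A))) := by
      ext σ
      simp only [Finset.mem_filter, Finset.mem_univ, true_and]
      exact key σ
    rw [hset]
    exact (Fintype.card_subtype _).symm
  rw [h1, DomMulAct.stabilizer_card]
  rw [Fintype.prod_bool]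
  have hT : Fintype.card {a : Fin n // decide (a ∈ A) = true} = A.card := by
    rw [Fintype.card_subtype]
    congr 1
    ext a
    simp
  have hF : Fintype.card {a : Fin n // decide (a ∈ A) = false} = n - A.card := by
    have : Fintype.card {a : Fin n // decide (a ∈ A) = false}
        = Fintype.card {a : Fin n // ¬ (a ∈ A)} := by
      apply Fintype.card_congr
      exact Equiv.subtypeEquivRight (fun a => by simp)
    rw [this, Fintype.card_subtype_compl, Fintype.card_fin]
    congr 1
    simp
  rw [hT, hF, Finset.card_univ, Fintype.card_fin]

/-- Drawing without replacement from configuration `(x_1,…,x_m)`: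
`P(K_r^{(1)} > k) = (k!(n-k)!/n!) · [t^k] ∏_i p_r(x_i,t)`. -/
theorem collision_time_without_replacement_gen_fun
    (n m k r : ℕ) (x : Fin m → ℕ) (c : Fin n → Fin m)
    (hx : ∀ i, (Finset.univ.filter (fun b : Fin n => c b = i)).card = x i)
    (hn : ∑ i, x i = n) (hk : k ≤ n) (hr : 2 ≤ r) :
    (Nat.card {σ : Equiv.Perm (Fin n) // ∀ i : Fin m,
        (Finset.univ.filter (fun t : Fin n => t.val < k ∧ c (σ t) = i)).card ≤ r - 1} : ℚ)
      / (Nat.factorial n : ℚ)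
    = ((Nat.factorial k : ℚ) * (Nat.factorial (n - k) : ℚ) / (Nat.factorial n : ℚ)) *
        (∏ i, pr r (x i)).coeff k := by
  classical
  set A : Finset (Fin n) := Finset.univ.filter (fun t : Fin n => t.val < k) with hA_def
  have hA : A.card = k := by
    have : A = (Finset.range k).attachFin
        (fun m hm => lt_of_lt_of_le (Finset.mem_range.mp hm) hk) := by
      ext a
      simp [hA_def, Finset.mem_attachFin]
    rw [this, Finset.card_attachFin, Finset.card_range]
  -- rewrite the condition in terms of the image of A
  have hcond : ∀ (σ : Equiv.Perm (Fin n)) (i : Fin m),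
      (Finset.univ.filter (fun t : Fin n => t.val < k ∧ c (σ t) = i)).card
        = ((A.image σ).filter (fun b => c b = i)).card := by
    intro σ i
    rw [Finset.filter_image, Finset.card_image_of_injective _ σ.injective, hA_def,
      Finset.filter_filter]
  set Good : Finset (Fin n) → Prop :=
    fun S => ∀ i, (S.filter (fun b => c b = i)).card ≤ r - 1 with hGood_def
  set G : Finset (Finset (Fin n)) :=
    (Finset.univ.powersetCard k).filter Good with hG_def
  set L : Finset (Fin m →₀ ℕ) :=
    (Finset.finsuppAntidiag Finset.univ k).filter (fun l => ∀ i, l i ≤ r - 1) with hL_def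
  -- the main count
  have hN : Nat.card {σ : Equiv.Perm (Fin n) // ∀ i : Fin m,
      (Finset.univ.filter (fun t : Fin n => t.val < k ∧ c (σ t) = i)).card ≤ r - 1}
      = G.card * (k.factorial * (n - k).factorial) := by
    rw [Nat.card_eq_fintype_card, Fintype.card_subtype]
    have hmap : ∀ σ ∈ (Finset.univ.filter (fun σ : Equiv.Perm (Fin n) => ∀ i : Fin m,
        (Finset.univ.filter (fun t : Fin n => t.val < k ∧ c (σ t) = i)).card ≤ r - 1)),
        A.image σ ∈ G := by
      intro σ hσ
      rw [Finset.mem_filter] at hσ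
      rw [hG_def, Finset.mem_filter, Finset.mem_powersetCard]
      refine ⟨⟨Finset.subset_univ _, by
        rw [Finset.card_image_of_injective _ σ.injective, hA]⟩, fun i => ?_⟩
      rw [← hcond σ i]
      exact hσ.2 i
    rw [Finset.card_eq_sum_card_fiberwise
      (f := fun σ : Equiv.Perm (Fin n) => A.image σ) (t := G) hmap]
    have hfib : ∀ S ∈ G, ((Finset.univ.filter (fun σ : Equiv.Perm (Fin n) => ∀ i : Fin m,
        (Finset.univ.filter (fun t : Fin n => t.val < k ∧ c (σ t) = i)).card ≤ r - 1)).filter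
          (fun σ : Equiv.Perm (Fin n) => A.image σ = S)).card
        = k.factorial * (n - k).factorial := by
      intro S hS
      rw [hG_def, Finset.mem_filter, Finset.mem_powersetCard] at hS
      have : (Finset.univ.filter (fun σ : Equiv.Perm (Fin n) => ∀ i : Fin m,
          (Finset.univ.filter (fun t : Fin n => t.val < k ∧ c (σ t) = i)).card ≤ r - 1)).filter
            (fun σ : Equiv.Perm (Fin n) => A.image σ = S)
          = Finset.univ.filter (fun σ : Equiv.Perm (Fin n) => A.image σ = S) := by
        refine Finset.ext fun σ => ?_
        simp only [Finset.mem_filter, Finset.mem_univ, true_and, and_iff_right_iff_imp]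
        intro himg i
        rw [hcond σ i, himg]
        exact hS.2 i
      rw [this, card_perm_image_eq A S (by rw [hA, hS.1.2]), hA, Finset.card_univ,
        Fintype.card_fin]
    rw [Finset.sum_congr rfl hfib, Finset.sum_const, smul_eq_mul]
  -- count good subsets via fiber counts
  have hG : G.card = ∑ l ∈ L, ∏ i, (x i).choose (l i) := by
    have hmap : ∀ S ∈ G, (Finsupp.equivFunOnFinite.symm
        (fun i => (S.filter (fun b => c b = i)).card) : Fin m →₀ ℕ) ∈ L := by
      intro S hS
      rw [hG_def, Finset.mem_filter, Finset.mem_powersetCard] at hS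
      rw [hL_def, Finset.mem_filter, Finset.mem_finsuppAntidiag]
      refine ⟨⟨?_, Finset.subset_univ _⟩, fun i => ?_⟩
      · have hsum : S.card = ∑ i, (S.filter (fun b => c b = i)).card :=
          Finset.card_eq_sum_card_fiberwise (fun b _ => Finset.mem_univ (c b))
        simp only [Finsupp.coe_equivFunOnFinite_symm]
        rw [← hsum]
        exact hS.1.2
      · simp only [Finsupp.coe_equivFunOnFinite_symm]
        exact hS.2 i
    rw [Finset.card_eq_sum_card_fiberwise hmap]
    refine Finset.sum_congr rfl (fun l hl => ?_)
    rw [hL_def, Finset.mem_filter, Finset.mem_finsuppAntidiag] at hl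
    have hfib : G.filter (fun S => (Finsupp.equivFunOnFinite.symm
        (fun i => (S.filter (fun b => c b = i)).card) : Fin m →₀ ℕ) = l)
        = Finset.univ.filter (fun S : Finset (Fin n) =>
            ∀ i, (S.filter (fun b => c b = i)).card = l i) := by
      ext S
      simp only [Finset.mem_filter, Finset.mem_univ, true_and]
      have heq : ((Finsupp.equivFunOnFinite.symm
          (fun i => (S.filter (fun b => c b = i)).card) : Fin m →₀ ℕ) = l)
          ↔ ∀ i, (S.filter (fun b => c b = i)).card = l i := by
        rw [Equiv.symm_apply_eq]
        constructor
        · intro h i; exact congrFun h i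
        · intro h; funext i; exact h i
      rw [heq]
      constructor
      · rintro ⟨_, h⟩; exact h
      · intro h
        refine ⟨?_, h⟩
        rw [hG_def, Finset.mem_filter, Finset.mem_powersetCard]
        refine ⟨⟨Finset.subset_univ _, ?_⟩, fun i => ?_⟩
        · have : S.card = ∑ i, (S.filter (fun b => c b = i)).card :=
            Finset.card_eq_sum_card_fiberwise (fun b _ => Finset.mem_univ (c b))
          rw [this, Finset.sum_congr rfl (fun i _ => h i)]
          exact hl.1.1
        · rw [h i]; exact hl.2 i
    rw [hfib, card_subsets_with_counts c (fun i => l i)]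
    exact Finset.prod_congr rfl (fun i _ => by rw [hx i])
  -- the generating function coefficient
  have hcoeff : (∏ i, pr r (x i)).coeff k = ∑ l ∈ L, ∏ i, ((x i).choose (l i) : ℚ) := by
    have h1 : (∏ i, pr r (x i)).coeff k
        = ∑ l ∈ Finset.finsuppAntidiag Finset.univ k, ∏ i, (pr r (x i)).coeff (l i) := by
      rw [← Polynomial.coeff_coe]
      have : ((∏ i, pr r (x i) : Polynomial ℚ) : PowerSeries ℚ)
          = ∏ i, ((pr r (x i) : Polynomial ℚ) : PowerSeries ℚ) := by
        simp only [← Polynomial.coeToPowerSeries.ringHom_apply]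
        exact map_prod _ _ _
      rw [this, PowerSeries.coeff_prod]
      exact Finset.sum_congr rfl (fun l _ => Finset.prod_congr rfl
        (fun i _ => by rw [Polynomial.coeff_coe]))
    rw [h1]
    rw [← Finset.sum_filter_of_ne (p := fun l : Fin m →₀ ℕ => ∀ i, l i ≤ r - 1) ?_]
    · rw [← hL_def]
      refine Finset.sum_congr rfl (fun l hl => Finset.prod_congr rfl (fun i _ => ?_))
      rw [hL_def, Finset.mem_filter] at hl
      rw [pr_coeff, if_pos]
      exact lt_of_le_of_lt (hl.2 i) (Nat.sub_lt (by omega) one_pos)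
    · intro l _ hne
      by_contra hcon
      push_neg at hcon
      obtain ⟨i, hi⟩ := hcon
      apply hne
      apply Finset.prod_eq_zero (Finset.mem_univ i)
      rw [pr_coeff, if_neg]
      omega
  -- put everything together
  rw [hN, hG, hcoeff]
  push_cast
  ring
end

section
/- For drawing without replacement from configuration (x_1,...,x_m) with n = sum x_i, the probability that the first 2-collision time exceeds k equals (k!(n-k)!/n!) · Sym_k(x_1,...,x_m), where Sym_k is the k-th elementary symmetric polynomial. -/
open Finset

noncomputable def symQ (m k : ℕ) (x : Fin m → ℕ) : ℚ :=
  ∑ s ∈ Finset.univ.powersetCard k, ∏ i ∈ s, (x i : ℚ)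

open Classical in
/-- Number of permutations extending a given injection on the first `k` coordinates. -/
lemma card_perm_ext {n k : ℕ} (hk : k ≤ n) (f : Fin k → Fin n) (hf : Function.Injective f) :
    Fintype.card {σ : Equiv.Perm (Fin n) // ∀ t : Fin k, σ (Fin.castLE hk t) = f t}
      = (n - k).factorial := by
  have hc : Function.Injective (Fin.castLE hk) := Fin.castLE_injective hk
  set e₀ : Set.range (Fin.castLE hk) ≃ Set.range f :=
    (Equiv.ofInjective _ hc).symm.trans (Equiv.ofInjective f hf) with he₀
  have key : {σ : Equiv.Perm (Fin n) // ∀ t : Fin k, σ (Fin.castLE hk t) = f t}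
      ≃ (((Set.range (Fin.castLE hk))ᶜ : Set (Fin n)) ≃ ((Set.range f)ᶜ : Set (Fin n))) := by
    refine (Equiv.subtypeEquivRight ?_).trans (Equiv.Set.compl e₀)
    intro σ
    constructor
    · rintro h ⟨_, t, rfl⟩
      simpa [he₀] using h t
    · intro h t
      simpa [he₀] using h ⟨Fin.castLE hk t, t, rfl⟩
  rw [Fintype.card_congr key]
  have h1 : Fintype.card (((Set.range (Fin.castLE hk))ᶜ : Set (Fin n)) : Type) = n - k := by
    rw [Fintype.card_compl_set, Fintype.card_fin,
      Fintype.card_congr (Equiv.ofInjective _ hc).symm, Fintype.card_fin]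
  have h2 : Fintype.card (((Set.range f)ᶜ : Set (Fin n)) : Type) = n - k := by
    rw [Fintype.card_compl_set, Fintype.card_fin,
      Fintype.card_congr (Equiv.ofInjective _ hf).symm, Fintype.card_fin]
  rw [Fintype.card_equiv (Fintype.equivOfCardEq (h1.trans h2.symm)), h1]

open Classical in
/-- Number of colourings-compatible functions. -/
lemma card_fiber_colors {n m k : ℕ} (c : Fin n → Fin m) (x : Fin m → ℕ)
    (hx : ∀ i, (Finset.univ.filter (fun b : Fin n => c b = i)).card = x i)
    (g : Fin k → Fin m) :
    Fintype.card {f : Fin k → Fin n // ∀ t, c (f t) = g t} = ∏ t, x (g t) := by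
  rw [Fintype.card_congr (Equiv.subtypePiEquivPi (p := fun t (b : Fin n) => c b = g t)),
    Fintype.card_pi]
  refine Finset.prod_congr rfl fun t _ => ?_
  rw [Fintype.card_subtype]
  exact hx (g t)

open Classical in
lemma card_fiber_image {m k : ℕ} (s : Finset (Fin m)) (hs : s.card = k) :
    Fintype.card {g : Fin k → Fin m // Function.Injective g ∧ Finset.image g Finset.univ = s}
      = k.factorial := by
  have e : {g : Fin k → Fin m // Function.Injective g ∧ Finset.image g Finset.univ = s}
      ≃ (Fin k ↪ {i // i ∈ s}) :=
    { toFun := fun g => ⟨fun t => ⟨g.1 t, by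
          have h : g.1 t ∈ Finset.image g.1 univ := Finset.mem_image_of_mem g.1 (mem_univ t)
          rwa [g.2.2] at h⟩,
        fun a b hab => g.2.1 (congrArg Subtype.val hab)⟩
      invFun := fun e => ⟨fun t => (e t : Fin m), by
        constructor
        · exact fun a b h => e.injective (Subtype.ext h)
        · refine Finset.eq_of_subset_of_card_le ?_ ?_
          · intro i hi
            obtain ⟨t, _, rfl⟩ := Finset.mem_image.mp hi
            exact (e t).2
          · rw [hs, Finset.card_image_of_injective _ (fun a b h => e.injective (Subtype.ext h)),
              Finset.card_univ, Fintype.card_fin]⟩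
      left_inv := fun g => Subtype.ext rfl
      right_inv := fun e => by ext t; rfl }
  rw [Fintype.card_congr e, Fintype.card_embedding_eq, Fintype.card_fin, Fintype.card_coe,
    hs, Nat.descFactorial_self]

/-- Drawing without replacement from configuration `(x_1,…,x_m)`:
`P(K_2^{(1)} > k) = (k!(n-k)!/n!) · Sym_k(x_1,…,x_m)`. -/
theorem collision_time_without_replacement_esymm
    (n m k : ℕ) (x : Fin m → ℕ) (c : Fin n → Fin m)
    (hx : ∀ i, (Finset.univ.filter (fun b : Fin n => c b = i)).card = x i)
    (hn : ∑ i, x i = n) (hk : k ≤ n) :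
    (Nat.card {σ : Equiv.Perm (Fin n) // ∀ i : Fin m,
        (Finset.univ.filter (fun t : Fin n => t.val < k ∧ c (σ t) = i)).card ≤ 1} : ℚ)
      / (Nat.factorial n : ℚ)
    = ((Nat.factorial k : ℚ) * (Nat.factorial (n - k) : ℚ) / (Nat.factorial n : ℚ)) *
        symQ m k x := by
  classical
  -- the collision-free condition is injectivity of the colours of the first k draws
  have hP : ∀ σ : Equiv.Perm (Fin n),
      (∀ i : Fin m, (Finset.univ.filter
          (fun t : Fin n => t.val < k ∧ c (σ t) = i)).card ≤ 1)
      ↔ Function.Injective (fun t : Fin k => c (σ (Fin.castLE hk t))) := by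
    intro σ
    constructor
    · intro h t₁ t₂ ht
      have ht' : c (σ (Fin.castLE hk t₁)) = c (σ (Fin.castLE hk t₂)) := ht
      have h1 : (Fin.castLE hk t₁) ∈ Finset.univ.filter
          (fun t : Fin n => t.val < k ∧ c (σ t) = c (σ (Fin.castLE hk t₂))) :=
        Finset.mem_filter.mpr ⟨mem_univ _, t₁.isLt, ht'⟩
      have h2 : (Fin.castLE hk t₂) ∈ Finset.univ.filter
          (fun t : Fin n => t.val < k ∧ c (σ t) = c (σ (Fin.castLE hk t₂))) :=
        Finset.mem_filter.mpr ⟨mem_univ _, t₂.isLt, rfl⟩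
      exact Fin.castLE_injective hk
        (Finset.card_le_one.mp (h (c (σ (Fin.castLE hk t₂)))) _ h1 _ h2)
    · intro h i
      rw [Finset.card_le_one]
      intro a ha b hb
      simp only [mem_filter, mem_univ, true_and] at ha hb
      have ha' : a = Fin.castLE hk ⟨a.val, ha.1⟩ := Fin.ext rfl
      have hb' : b = Fin.castLE hk ⟨b.val, hb.1⟩ := Fin.ext rfl
      have key := h (a₁ := ⟨a.val, ha.1⟩) (a₂ := ⟨b.val, hb.1⟩) (by
        show c (σ (Fin.castLE hk ⟨a.val, ha.1⟩)) = c (σ (Fin.castLE hk ⟨b.val, hb.1⟩))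
        rw [← ha', ← hb', ha.2, hb.2])
      rw [ha', hb', key]
  -- main counting identity
  have main : Nat.card {σ : Equiv.Perm (Fin n) // ∀ i : Fin m,
        (Finset.univ.filter (fun t : Fin n => t.val < k ∧ c (σ t) = i)).card ≤ 1}
      = ((∑ s ∈ Finset.univ.powersetCard k, ∏ i ∈ s, x i) * k.factorial) *
          (n - k).factorial := by
    rw [Nat.card_eq_fintype_card, Fintype.card_subtype]
    set A := Finset.univ.filter (fun σ : Equiv.Perm (Fin n) => ∀ i : Fin m,
        (Finset.univ.filter (fun t : Fin n => t.val < k ∧ c (σ t) = i)).card ≤ 1) with hA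
    set B := Finset.univ.filter
        (fun f : Fin k → Fin n => Function.Injective (c ∘ f)) with hB
    set C := Finset.univ.filter
        (fun g : Fin k → Fin m => Function.Injective g) with hC
    have stepA : A.card = B.card * (n - k).factorial := by
      rw [Finset.card_eq_sum_card_fiberwise
        (f := fun (σ : Equiv.Perm (Fin n)) (t : Fin k) => σ (Fin.castLE hk t)) (t := B)
        (fun σ hσ => by
          simp only [Finset.mem_coe, hA, mem_filter, mem_univ, true_and] at hσ
          simp only [Finset.mem_coe, hB, mem_filter, mem_univ, true_and]
          exact (hP σ).mp hσ)]
      have hfiber : ∀ f ∈ B,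
          (A.filter (fun σ : Equiv.Perm (Fin n) =>
            (fun t : Fin k => σ (Fin.castLE hk t)) = f)).card = (n - k).factorial := by
        intro f hf
        have hfB : Function.Injective (c ∘ f) := by simpa [hB] using hf
        have hfinj : Function.Injective f := fun a b hab => hfB (by
          simp only [Function.comp_apply, hab])
        have hset : A.filter (fun σ : Equiv.Perm (Fin n) =>
              (fun t : Fin k => σ (Fin.castLE hk t)) = f)
            = Finset.univ.filter (fun σ : Equiv.Perm (Fin n) =>
                ∀ t : Fin k, σ (Fin.castLE hk t) = f t) := by
          ext σ
          simp only [hA, Finset.mem_filter, mem_univ, true_and, funext_iff]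
          constructor
          · rintro ⟨-, h⟩; exact h
          · intro hσ
            refine ⟨(hP σ).mpr ?_, hσ⟩
            intro a b hab
            have hab' : c (σ (Fin.castLE hk a)) = c (σ (Fin.castLE hk b)) := hab
            rw [hσ a, hσ b] at hab'
            exact hfB hab'
        rw [hset, ← Fintype.card_subtype, card_perm_ext hk f hfinj]
      rw [Finset.sum_congr rfl hfiber, Finset.sum_const, smul_eq_mul]
    have stepB : B.card = ∑ g ∈ C, ∏ t, x (g t) := by
      rw [Finset.card_eq_sum_card_fiberwise
        (f := fun f : Fin k → Fin n => c ∘ f) (t := C)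
        (fun f hf => by
          simp only [Finset.mem_coe, hB, mem_filter, mem_univ, true_and] at hf
          simp only [Finset.mem_coe, hC, mem_filter, mem_univ, true_and]
          exact hf)]
      refine Finset.sum_congr rfl fun g hg => ?_
      have hginj : Function.Injective g := by simpa [hC] using hg
      have hset : B.filter (fun f : Fin k → Fin n => c ∘ f = g)
          = Finset.univ.filter (fun f : Fin k → Fin n => ∀ t, c (f t) = g t) := by
        ext f
        simp only [hB, Finset.mem_filter, mem_univ, true_and, funext_iff,
          Function.comp_apply]
        constructor
        · rintro ⟨-, h⟩; exact h
        · intro hf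
          refine ⟨?_, hf⟩
          intro a b hab
          have hab' : c (f a) = c (f b) := hab
          rw [hf a, hf b] at hab'
          exact hginj hab'
      rw [hset, ← Fintype.card_subtype, card_fiber_colors c x hx g]
    have stepC : (∑ g ∈ C, ∏ t, x (g t))
        = (∑ s ∈ Finset.univ.powersetCard k, ∏ i ∈ s, x i) * k.factorial := by
      rw [← Finset.sum_fiberwise_of_maps_to
        (g := fun g : Fin k → Fin m => Finset.image g Finset.univ)
        (t := Finset.univ.powersetCard k)
        (fun g hg => by
          have hginj : Function.Injective g := by simpa [hC] using hg
          rw [Finset.mem_powersetCard_univ, Finset.card_image_of_injective _ hginj,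
            Finset.card_univ, Fintype.card_fin])]
      rw [Finset.sum_mul]
      refine Finset.sum_congr rfl fun s hs => ?_
      have hsk : s.card = k := Finset.mem_powersetCard_univ.mp hs
      have hterm : ∀ g ∈ C.filter
            (fun g : Fin k → Fin m => Finset.image g Finset.univ = s),
          (∏ t, x (g t)) = ∏ i ∈ s, x i := by
        intro g hg
        simp only [Finset.mem_filter] at hg
        obtain ⟨hgC, hgs⟩ := hg
        have hginj : Function.Injective g := by simpa [hC] using hgC
        rw [← hgs, Finset.prod_image (fun a _ b _ hab => hginj hab)]
      have hset : C.filter (fun g : Fin k → Fin m => Finset.image g Finset.univ = s)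
          = Finset.univ.filter (fun g : Fin k → Fin m =>
              Function.Injective g ∧ Finset.image g Finset.univ = s) := by
        ext g
        simp [hC, and_assoc]
      rw [Finset.sum_congr rfl hterm, Finset.sum_const, smul_eq_mul, hset,
        ← Fintype.card_subtype, card_fiber_image s hsk, mul_comm]
    rw [stepA, stepB, stepC]
  rw [main]
  have hn0 : (n.factorial : ℚ) ≠ 0 := Nat.cast_ne_zero.mpr (Nat.factorial_ne_zero n)
  rw [symQ]
  push_cast
  field_simp
end

section
/- For drawing with replacement from configuration (x_1,...,x_m), n = sum x_i, the probability that the first 2-repetition time exceeds k equals (k!/n^k) · Sym_k(x_1,...,x_m). -/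
open Finset

section Aux

variable {n m k : ℕ}

/-- Functions with all colours distinct correspond to a colour embedding plus a choice of ball
of each colour. -/
private def E1 (c : Fin n → Fin m) :
    {f : Fin k → Fin n // ∀ i : Fin m,
        (Finset.univ.filter (fun t : Fin k => c (f t) = i)).card ≤ 1} ≃
    Σ g : Fin k ↪ Fin m, ∀ t : Fin k, {b : Fin n // c b = g t} where
  toFun f :=
    ⟨⟨fun t => c (f.1 t), by
      intro t₁ t₂ h
      refine Finset.card_le_one.mp (f.2 (c (f.1 t₂))) t₁ ?_ t₂ ?_ <;> simp [h]⟩,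
      fun t => ⟨f.1 t, rfl⟩⟩
  invFun p :=
    ⟨fun t => (p.2 t).1, by
      intro i
      refine Finset.card_le_one.mpr ?_
      intro t₁ h₁ t₂ h₂
      simp only [Finset.mem_filter] at h₁ h₂
      apply p.1.injective
      show p.1 t₁ = p.1 t₂
      rw [← (p.2 t₁).2, ← (p.2 t₂).2, h₁.2, h₂.2]⟩
  left_inv f := Subtype.ext rfl
  right_inv := by
    rintro ⟨g, h⟩
    refine Sigma.ext (Function.Embedding.ext fun t => (h t).2) ?_
    refine Function.hfunext rfl fun t t' ht => ?_
    cases eq_of_heq ht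
    exact (Subtype.heq_iff_coe_eq fun b => by show c b = c (h t).1 ↔ c b = g t; rw [(h t).2]).mpr rfl

/-- Embeddings with fixed image `s` (with `s.card = k`) correspond to embeddings into `s`. -/
private def E2 (s : Finset (Fin m)) (hcard : s.card = k) :
    {g : Fin k ↪ Fin m // Finset.image (⇑g) Finset.univ = s} ≃ (Fin k ↪ (↥s)) where
  toFun g :=
    ⟨fun t => ⟨g.1 t, by have := Finset.mem_image_of_mem (⇑g.1) (Finset.mem_univ t); rwa [g.2] at this⟩,
      fun a b hab => g.1.injective (congrArg Subtype.val hab)⟩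
  invFun e :=
    ⟨⟨fun t => (e t).1, fun a b hab => e.injective (Subtype.ext hab)⟩, by
      apply Finset.eq_of_subset_of_card_le
      · exact Finset.image_subset_iff.mpr fun t _ => (e t).2
      · show s.card ≤ (Finset.univ.image (fun t => (e t).1)).card
        rw [Finset.card_image_of_injective _ (fun a b hab => e.injective (Subtype.ext hab)),
          Finset.card_univ, Fintype.card_fin, hcard]⟩
  left_inv g := Subtype.ext (Function.Embedding.ext fun t => rfl)
  right_inv e := Function.Embedding.ext fun t => Subtype.ext rfl

private lemma cardA (c : Fin n → Fin m) (x : Fin m → ℕ)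
    (hx : ∀ i, (Finset.univ.filter (fun b : Fin n => c b = i)).card = x i) :
    Nat.card {f : Fin k → Fin n // ∀ i : Fin m,
        (Finset.univ.filter (fun t : Fin k => c (f t) = i)).card ≤ 1}
      = ∑ g : Fin k ↪ Fin m, ∏ t : Fin k, x (g t) := by
  rw [Nat.card_eq_fintype_card, Fintype.card_congr (E1 c), Fintype.card_sigma]
  refine Finset.sum_congr rfl fun g _ => ?_
  rw [Fintype.card_pi]
  exact Finset.prod_congr rfl fun t _ => by rw [Fintype.card_subtype, hx]

private lemma fiber_card (s : Finset (Fin m)) (hcard : s.card = k) :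
    (Finset.univ.filter (fun g : Fin k ↪ Fin m => Finset.image (⇑g) Finset.univ = s)).card
      = k.factorial := by
  rw [← Fintype.card_subtype, Fintype.card_congr (E2 s hcard), Fintype.card_embedding_eq,
    Fintype.card_coe, hcard, Fintype.card_fin, Nat.descFactorial_self]

private lemma sumB (x : Fin m → ℕ) :
    ∑ g : Fin k ↪ Fin m, ∏ t : Fin k, x (g t)
      = k.factorial * ∑ s ∈ Finset.univ.powersetCard k, ∏ i ∈ s, x i := by
  classical
  have hmaps : ∀ g ∈ (Finset.univ : Finset (Fin k ↪ Fin m)),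
      Finset.image (⇑g) Finset.univ ∈ (Finset.univ : Finset (Fin m)).powersetCard k := by
    intro g _
    refine Finset.mem_powersetCard.mpr ⟨Finset.subset_univ _, ?_⟩
    rw [Finset.card_image_of_injective _ g.injective, Finset.card_univ, Fintype.card_fin]
  rw [← Finset.sum_fiberwise_of_maps_to hmaps (fun g : Fin k ↪ Fin m => ∏ t : Fin k, x (g t)),
    Finset.mul_sum]
  refine Finset.sum_congr rfl fun s hs => ?_
  obtain ⟨-, hcard⟩ := Finset.mem_powersetCard.mp hs
  have h1 : ∀ g ∈ Finset.univ.filter (fun g : Fin k ↪ Fin m => Finset.image (⇑g) Finset.univ = s),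
      ∏ t : Fin k, x (g t) = ∏ i ∈ s, x i := by
    intro g hg
    rw [Finset.mem_filter] at hg
    rw [← hg.2, Finset.prod_image (fun a _ b _ h => g.injective h)]
  rw [Finset.sum_congr rfl h1, Finset.sum_const, smul_eq_mul, fiber_card s hcard]

end Aux

/-- Drawing with replacement from configuration `(x_1,…,x_m)`:
`P(R_2 > k) = (k!/n^k) · Sym_k(x_1,…,x_m)`. -/
theorem repetition_time_with_replacement_esymm
    (n m k : ℕ) (x : Fin m → ℕ) (c : Fin n → Fin m)
    (hx : ∀ i, (Finset.univ.filter (fun b : Fin n => c b = i)).card = x i)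
    (hn : ∑ i, x i = n) :
    (Nat.card {f : Fin k → Fin n // ∀ i : Fin m,
        (Finset.univ.filter (fun t : Fin k => c (f t) = i)).card ≤ 1} : ℚ)
      / (n ^ k : ℚ)
    = ((Nat.factorial k : ℚ) / (n ^ k : ℚ)) * symQ m k x := by
  have hA := cardA (k := k) c x hx
  have hB := sumB (k := k) (m := m) x
  rw [hA, hB, symQ]
  push_cast
  ring
end

section
/- Let x, y be positive reals with x < y, let r ≥ 2, and let q_r(t) := sum_{i=0}^{r-1} t^i/i!. Then for every k, the coefficient of t^k in q_r(x t) q_r(y t) is at most the coefficient of t^k in q_r(((x+y)/2) t)^2. -/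
open Finset Polynomial

/-- `q_r(a·t) = ∑_{i=0}^{r-1} a^i t^i / i!` as a polynomial over `ℝ`. -/
noncomputable def qrPoly (r : ℕ) (a : ℝ) : Polynomial ℝ :=
  ∑ i ∈ Finset.range r, Polynomial.C (a ^ i / (Nat.factorial i : ℝ)) * Polynomial.X ^ i

lemma qrPoly_coeff (r : ℕ) (a : ℝ) (j : ℕ) :
    (qrPoly r a).coeff j = if j < r then a ^ j / (Nat.factorial j : ℝ) else 0 := by
  simp [qrPoly, Polynomial.finset_sum_coeff, coeff_C_mul, coeff_X_pow]

lemma coeff_mul_qr (r : ℕ) (x y : ℝ) (k : ℕ) :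
    (qrPoly r x * qrPoly r y).coeff k =
      ∑ i ∈ Finset.range (k+1),
        if i < r ∧ k - i < r then x ^ i * y ^ (k - i) / ((i.factorial : ℝ) * (k-i).factorial)
        else 0 := by
  rw [Polynomial.coeff_mul, Finset.Nat.sum_antidiagonal_eq_sum_range_succ_mk]
  apply Finset.sum_congr rfl
  intro i hi
  rw [qrPoly_coeff, qrPoly_coeff]
  by_cases h1 : i < r <;> by_cases h2 : k - i < r <;> simp [h1, h2] <;> ring

lemma full_sum (x y : ℝ) (k : ℕ) :
    ∑ i ∈ Finset.range (k+1), x ^ i * y ^ (k-i) / ((i.factorial : ℝ) * (k-i).factorial)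
      = (x + y) ^ k / k.factorial := by
  rw [add_pow, Finset.sum_div]
  apply Finset.sum_congr rfl
  intro i hi
  have hik : i ≤ k := Nat.lt_succ_iff.mp (Finset.mem_range.mp hi)
  have h : ((k.choose i : ℝ)) * i.factorial * (k-i).factorial = k.factorial := by
    exact_mod_cast Nat.choose_mul_factorial_mul_factorial hik
  have h1 : (i.factorial : ℝ) ≠ 0 := Nat.cast_ne_zero.mpr i.factorial_ne_zero
  have h2 : ((k-i).factorial : ℝ) ≠ 0 := Nat.cast_ne_zero.mpr (k-i).factorial_ne_zero
  have h3 : (k.factorial : ℝ) ≠ 0 := Nat.cast_ne_zero.mpr k.factorial_ne_zero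
  field_simp
  rw [← h]; ring

lemma filter_eq_Icc (r k : ℕ) (hr : 2 ≤ r) (hk : r ≤ k) :
    (Finset.range (k+1)).filter (fun i => i < r ∧ k - i < r) = Finset.Icc (k - r + 1) (r - 1) := by
  ext i
  simp only [Finset.mem_filter, Finset.mem_range, Finset.mem_Icc]
  omega

lemma term_hasDeriv (k i : ℕ) (hi1 : 1 ≤ i) (hik : i + 1 ≤ k) (m d : ℝ) :
    HasDerivAt (fun t => (m-t)^i*(m+t)^(k-i)/((i.factorial : ℝ)*(k-i).factorial))
      ((m-d)^i*(m+d)^(k-1-i)/((i.factorial : ℝ)*(k-1-i).factorial)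
        - (m-d)^(i-1)*(m+d)^(k-1-(i-1))/(((i-1).factorial : ℝ)*(k-1-(i-1)).factorial)) d := by
  obtain ⟨p, rfl⟩ : ∃ p, i = p + 1 := ⟨i - 1, by omega⟩
  obtain ⟨q, hq⟩ : ∃ q, k = p + q + 2 := ⟨k - p - 2, by omega⟩
  subst hq
  have h1 : HasDerivAt (fun t : ℝ => (m - t)) (-1) d := by
    simpa using (hasDerivAt_id d).const_sub m
  have h2 : HasDerivAt (fun t : ℝ => (m + t)) 1 d := by
    simpa using (hasDerivAt_id d).const_add m
  have h3 := ((h1.pow (p+1)).mul (h2.pow (p + q + 2 - (p+1)))).div_const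
    (((p+1).factorial : ℝ)*((p + q + 2 - (p+1)).factorial))
  convert h3 using 1
  case e'_4 => rfl
  case e'_5 => rfl
  case e'_8 => rfl
  have e1 : p + q + 2 - (p+1) = q + 1 := by omega
  have e2 : p + q + 2 - 1 - (p+1) = q := by omega
  have e3 : p + q + 2 - 1 - (p+1-1) = q + 1 := by omega
  have e4 : p + 1 - 1 = p := by omega
  rw [e1, e2, e3, e4]
  have f1 : ((p+1).factorial : ℝ) = (p+1) * p.factorial := by
    exact_mod_cast Nat.factorial_succ p
  have f2 : ((q+1).factorial : ℝ) = (q+1) * q.factorial := by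
    exact_mod_cast Nat.factorial_succ q
  have g1 : (p.factorial : ℝ) ≠ 0 := Nat.cast_ne_zero.mpr p.factorial_ne_zero
  have g2 : (q.factorial : ℝ) ≠ 0 := Nat.cast_ne_zero.mpr q.factorial_ne_zero
  rw [f1, f2]
  simp only [Pi.pow_apply, Nat.cast_add, Nat.cast_one, Nat.add_sub_cancel]
  have hp1 : ((p:ℝ)+1) ≠ 0 := by positivity
  have hq1 : ((q:ℝ)+1) ≠ 0 := by positivity
  field_simp
  ring

lemma sum_hasDeriv (k a b : ℕ) (ha : 1 ≤ a) (hab : a ≤ b) (hk : a + b = k) (m d : ℝ) :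
    HasDerivAt (fun t => ∑ i ∈ Finset.Icc a b,
        (m-t)^i*(m+t)^(k-i)/((i.factorial : ℝ)*(k-i).factorial))
      (((m-d)^b*(m+d)^(a-1) - (m-d)^(a-1)*(m+d)^b)/((b.factorial : ℝ)*(a-1).factorial)) d := by
  set T : ℕ → ℝ := fun j => (m-d)^j*(m+d)^(k-1-j)/((j.factorial : ℝ)*(k-1-j).factorial) with hT
  have h : HasDerivAt (fun t => ∑ i ∈ Finset.Icc a b,
      (m-t)^i*(m+t)^(k-i)/((i.factorial : ℝ)*(k-i).factorial))
      (∑ i ∈ Finset.Icc a b, (T i - T (i-1))) d := by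
    apply HasDerivAt.fun_sum
    intro i hi
    simp only [Finset.mem_Icc] at hi
    exact term_hasDeriv k i (le_trans ha hi.1) (by omega) m d
  convert h using 1
  have htel : ∑ i ∈ Finset.Icc a b, (T i - T (i-1)) = T b - T (a-1) := by
    have : ∑ i ∈ Finset.Icc a b, (T i - T (i-1))
        = ∑ j ∈ Finset.range (b + 1 - a), (T (a - 1 + (j+1)) - T (a - 1 + j)) := by
      rw [← Finset.Ico_add_one_right_eq_Icc, Finset.sum_Ico_eq_sum_range]
      apply Finset.sum_congr rfl
      intro j hj
      congr 2 <;> omega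
    rw [this, Finset.sum_range_sub (fun j => T (a - 1 + j))]
    congr 2 <;> omega
  rw [htel, hT]
  have e1 : k - 1 - b = a - 1 := by omega
  have e2 : k - 1 - (a-1) = b := by omega
  simp only [e1, e2]
  ring

/-- Balancing two preimage sizes: for `0 < x < y` and `r ≥ 2`, every coefficient of
`q_r(xt)q_r(yt)` is at most the corresponding coefficient of `q_r(((x+y)/2)t)^2`. -/
theorem qr_balance_coeff_le (r : ℕ) (hr : 2 ≤ r) (x y : ℝ) (hx : 0 < x) (hxy : x < y)
    (k : ℕ) :
    (qrPoly r x * qrPoly r y).coeff k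
      ≤ (qrPoly r ((x + y) / 2) * qrPoly r ((x + y) / 2)).coeff k := by
  rw [coeff_mul_qr, coeff_mul_qr]
  rcases lt_or_ge k r with hkr | hkr
  · -- low degrees: both coefficients are equal
    have hcond : ∀ i ∈ Finset.range (k+1), (i < r ∧ k - i < r) := by
      intro i hi
      simp only [Finset.mem_range] at hi
      omega
    rw [Finset.sum_congr rfl (fun i hi => if_pos (hcond i hi)),
      Finset.sum_congr rfl (fun i hi => if_pos (hcond i hi)),
      full_sum, full_sum]
    rw [show (x+y)/2 + (x+y)/2 = x + y by ring]
  · rcases le_or_gt (2*r - 1) k with hk2 | hk2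
    · -- high degrees: both coefficients vanish
      have hcond : ∀ i ∈ Finset.range (k+1), ¬(i < r ∧ k - i < r) := by
        intro i hi
        simp only [Finset.mem_range] at hi
        omega
      rw [Finset.sum_congr rfl (fun i hi => if_neg (hcond i hi)),
        Finset.sum_congr rfl (fun i hi => if_neg (hcond i hi))]
    · -- middle range: use monotonicity along the balancing path
      have hk3 : k ≤ 2*r - 2 := by omega
      rw [← Finset.sum_filter, ← Finset.sum_filter, filter_eq_Icc r k hr hkr]
      set m : ℝ := (x + y) / 2 with hm
      set a := k - r + 1 with hA
      set b := r - 1 with hB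
      have ha : 1 ≤ a := by omega
      have hab : a ≤ b := by omega
      have habk : a + b = k := by omega
      set f : ℝ → ℝ := fun t => ∑ i ∈ Finset.Icc a b,
        (m-t)^i*(m+t)^(k-i)/((i.factorial : ℝ)*(k-i).factorial) with hf
      have key : ∀ d : ℝ, HasDerivAt f
          (((m-d)^b*(m+d)^(a-1) - (m-d)^(a-1)*(m+d)^b)/((b.factorial : ℝ)*(a-1).factorial)) d :=
        fun d => sum_hasDeriv k a b ha hab habk m d
      have hanti : AntitoneOn f (Set.Icc 0 m) := by
        apply antitoneOn_of_deriv_nonpos (convex_Icc 0 m)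
        · exact fun t _ => (key t).differentiableAt.continuousAt.continuousWithinAt
        · intro t _
          exact (key t).differentiableAt.differentiableWithinAt
        · intro t ht
          rw [interior_Icc] at ht
          rw [(key t).deriv]
          have h0 : (0:ℝ) ≤ m - t := by linarith [ht.2]
          have h1 : m - t ≤ m + t := by linarith [ht.1]
          apply div_nonpos_of_nonpos_of_nonneg
          · rw [sub_nonpos]
            obtain ⟨c, hc⟩ : ∃ c, b = (a-1) + c := ⟨b - (a-1), by omega⟩
            rw [hc]
            calc (m-t)^((a-1)+c)*(m+t)^(a-1)
                = ((m-t)^(a-1)*(m+t)^(a-1)) * (m-t)^c := by rw [pow_add]; ring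
              _ ≤ ((m-t)^(a-1)*(m+t)^(a-1)) * (m+t)^c := by
                  apply mul_le_mul_of_nonneg_left (pow_le_pow_left₀ h0 h1 c)
                  exact mul_nonneg (pow_nonneg h0 _) (pow_nonneg (le_trans h0 h1) _)
              _ = (m-t)^(a-1)*(m+t)^((a-1)+c) := by rw [pow_add]; ring
          · positivity
      have hmpos : (0:ℝ) < m := by rw [hm]; linarith
      have hD0 : (0:ℝ) ≤ (y - x)/2 := by linarith
      have hDm : (y - x)/2 ≤ m := by rw [hm]; linarith
      have hle : f ((y - x)/2) ≤ f 0 :=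
        hanti (Set.mem_Icc.mpr ⟨le_refl 0, le_of_lt hmpos⟩)
          (Set.mem_Icc.mpr ⟨hD0, hDm⟩) hD0
      have e1 : f ((y - x)/2) = ∑ i ∈ Finset.Icc a b,
          x ^ i * y ^ (k-i) / ((i.factorial : ℝ)*(k-i).factorial) := by
        rw [hf]
        apply Finset.sum_congr rfl
        intro i _
        rw [show m - (y - x)/2 = x by rw [hm]; ring, show m + (y - x)/2 = y by rw [hm]; ring]
      have e2 : f 0 = ∑ i ∈ Finset.Icc a b,
          m ^ i * m ^ (k-i) / ((i.factorial : ℝ)*(k-i).factorial) := by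
        rw [hf]
        apply Finset.sum_congr rfl
        intro i _
        rw [sub_zero, add_zero]
      rw [e1, e2] at hle
      exact hle
end

section
/- For every k ∈ ℕ and r ≥ 2, the r-collision time for drawing with replacement stochastically dominates the r-collision time for drawing without replacement: P(K_r^{(2)} > k) ≥ P(K_r^{(1)} > k), for any fixed configuration (x_1,...,x_m). -/
open Finset

/-- A set of balls is "good" if it contains at most `r` balls of each colour. -/
def IsGoodSet {n m : ℕ} (c : Fin n → Fin m) (r : ℕ) (S : Finset (Fin n)) : Prop :=
  ∀ i, (S.filter (fun b => c b = i)).card ≤ r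

instance {n m : ℕ} (c : Fin n → Fin m) (r : ℕ) : DecidablePred (IsGoodSet c r) := fun _ => by
  unfold IsGoodSet; infer_instance

lemma isGoodSet_mono {n m : ℕ} (c : Fin n → Fin m) {r : ℕ} {S T : Finset (Fin n)}
    (h : S ⊆ T) (hT : IsGoodSet c r T) : IsGoodSet c r S := fun i =>
  le_trans (Finset.card_le_card (Finset.filter_subset_filter _ h)) (hT i)

lemma exists_perm_mem_iff {n : ℕ} {S S' : Finset (Fin n)} (h : S.card = S'.card) :
    ∃ π : Equiv.Perm (Fin n), ∀ a, π a ∈ S' ↔ a ∈ S := by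
  classical
  have h1 : Fintype.card {a : Fin n // a ∈ S} = Fintype.card {a : Fin n // a ∈ S'} := by
    simpa [Fintype.card_coe] using h
  have h2 : Fintype.card {a : Fin n // ¬ a ∈ S} = Fintype.card {a : Fin n // ¬ a ∈ S'} := by
    rw [Fintype.card_subtype_compl, Fintype.card_subtype_compl, h1]
  set e := Fintype.equivOfCardEq h1
  set e' := Fintype.equivOfCardEq h2
  refine ⟨(Equiv.sumCompl (· ∈ S)).symm.trans ((e.sumCongr e').trans
      (Equiv.sumCompl (· ∈ S'))), fun a => ?_⟩
  by_cases ha : a ∈ S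
  · rw [Equiv.trans_apply, Equiv.trans_apply, Equiv.sumCompl_symm_apply_of_pos ha]
    simp only [Equiv.sumCongr_apply, Sum.map_inl, Equiv.sumCompl_apply_inl]
    exact iff_of_true (e ⟨a, ha⟩).2 ha
  · rw [Equiv.trans_apply, Equiv.trans_apply, Equiv.sumCompl_symm_apply_of_neg ha]
    simp only [Equiv.sumCongr_apply, Sum.map_inr, Equiv.sumCompl_apply_inr]
    exact iff_of_false (e' ⟨a, ha⟩).2 ha

lemma exists_perm_image {n : ℕ} {S S' : Finset (Fin n)} (h : S.card = S'.card) :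
    ∃ π : Equiv.Perm (Fin n), S.image π = S' := by
  obtain ⟨π, hπ⟩ := exists_perm_mem_iff h
  refine ⟨π, Finset.eq_of_subset_of_card_le ?_ ?_⟩
  · intro b hb
    obtain ⟨a, ha, rfl⟩ := Finset.mem_image.1 hb
    exact (hπ a).2 ha
  · exact le_of_eq (by rw [Finset.card_image_of_injective _ π.injective, h])

lemma funFiber_card {n : ℕ} (k : ℕ) {S S' : Finset (Fin n)} (h : S.card = S'.card) :
    ((univ : Finset (Fin k → Fin n)).filter (fun f => Finset.image f univ = S)).card =
    ((univ : Finset (Fin k → Fin n)).filter (fun f => Finset.image f univ = S')).card := by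
  classical
  obtain ⟨π, hπ⟩ := exists_perm_image h
  have hπ' : S'.image π.symm = S := by
    rw [← hπ, Finset.image_image]; simp
  apply Finset.card_nbij' (fun f => π ∘ f) (fun g => (π.symm : Fin n → Fin n) ∘ g)
  · intro f hf
    simp only [Finset.mem_coe, Finset.mem_filter, Finset.mem_univ, true_and] at hf ⊢
    rw [← Finset.image_image, hf, hπ]
  · intro g hg
    simp only [Finset.mem_coe, Finset.mem_filter, Finset.mem_univ, true_and] at hg ⊢
    rw [← Finset.image_image, hg, hπ']
  · intro f _; funext t; simp
  · intro g _; funext t; simp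

lemma permFiber_card {n : ℕ} (D : Finset (Fin n)) {S S' : Finset (Fin n)} (h : S.card = S'.card) :
    ((univ : Finset (Equiv.Perm (Fin n))).filter (fun σ : Equiv.Perm (Fin n) => D.image ⇑σ = S)).card =
    ((univ : Finset (Equiv.Perm (Fin n))).filter (fun σ : Equiv.Perm (Fin n) => D.image ⇑σ = S')).card := by
  classical
  obtain ⟨π, hπ⟩ := exists_perm_image h
  have hπ' : S'.image π.symm = S := by
    rw [← hπ, Finset.image_image]; simp
  apply Finset.card_nbij' (fun σ => σ.trans π) (fun σ => σ.trans π.symm)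
  · intro σ hσ
    simp only [Finset.mem_coe, Finset.mem_filter, Finset.mem_univ, true_and] at hσ ⊢
    rw [Equiv.coe_trans, ← Finset.image_image, hσ, hπ]
  · intro σ hσ
    simp only [Finset.mem_coe, Finset.mem_filter, Finset.mem_univ, true_and] at hσ ⊢
    rw [Equiv.coe_trans, ← Finset.image_image, hσ, hπ']
  · intro σ _; ext a; simp
  · intro σ _; ext a; simp

lemma card_canon (n d : ℕ) :
    ((univ : Finset (Fin n)).filter (fun t => t.val < d)).card = min d n := by
  have hsub : ∀ p ∈ Finset.range (min d n), p < n := by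
    intro p hp; rw [Finset.mem_range] at hp; omega
  have : (univ : Finset (Fin n)).filter (fun t => t.val < d) =
      (Finset.range (min d n)).attachFin hsub := by
    ext a
    have := a.isLt
    simp only [Finset.mem_filter, Finset.mem_univ, true_and, Finset.mem_attachFin,
      Finset.mem_range]
    omega
  rw [this, Finset.card_attachFin, Finset.card_range]

lemma card_supersets_le {n : ℕ} {S : Finset (Fin n)} {d K : ℕ} (hS : S.card = d) :
    ((powersetCard K (univ : Finset (Fin n))).filter (fun T => S ⊆ T)).card ≤
      (n - d).choose (K - d) := by
  classical
  have hmaps : ∀ T ∈ (powersetCard K (univ : Finset (Fin n))).filter (fun T => S ⊆ T),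
      T \ S ∈ powersetCard (K - d) ((univ : Finset (Fin n)) \ S) := by
    intro T hT
    rw [Finset.mem_filter, Finset.mem_powersetCard] at hT
    rw [Finset.mem_powersetCard]
    refine ⟨Finset.sdiff_subset_sdiff hT.1.1 (Finset.Subset.refl _), ?_⟩
    rw [Finset.card_sdiff_of_subset hT.2, hT.1.2, hS]
  refine le_trans (Finset.card_le_card_of_injOn (fun T => T \ S) hmaps ?_) ?_
  · intro T1 h1 T2 h2 he
    simp only [Finset.coe_filter, Set.mem_setOf_eq, Finset.mem_powersetCard] at h1 h2
    have e1 := Finset.sdiff_union_of_subset h1.2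
    have e2 := Finset.sdiff_union_of_subset h2.2
    rw [← e1, ← e2]
    simp only at he
    rw [he]
  · rw [Finset.card_powersetCard, Finset.card_sdiff_of_subset (Finset.subset_univ S),
      Finset.card_univ, Fintype.card_fin, hS]

lemma double_count {n m : ℕ} (c : Fin n → Fin m) (r d K : ℕ) (hdK : d ≤ K) :
    ((powersetCard K (univ : Finset (Fin n))).filter (IsGoodSet c r)).card * K.choose d ≤
    ((powersetCard d (univ : Finset (Fin n))).filter (IsGoodSet c r)).card *
      (n - d).choose (K - d) := by
  classical
  set GK := (powersetCard K (univ : Finset (Fin n))).filter (IsGoodSet c r) with hGK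
  set Gd := (powersetCard d (univ : Finset (Fin n))).filter (IsGoodSet c r) with hGd
  have h1 : (GK.sigma (fun T => T.powersetCard d)).card = GK.card * K.choose d := by
    rw [Finset.card_sigma]
    have hc : ∀ T ∈ GK, (T.powersetCard d).card = K.choose d := by
      intro T hT
      rw [Finset.card_powersetCard, (Finset.mem_powersetCard.1 (Finset.mem_filter.1 hT).1).2]
    rw [Finset.sum_congr rfl hc, Finset.sum_const, smul_eq_mul]
  have h2 : (Gd.sigma (fun S => (powersetCard K (univ : Finset (Fin n))).filter
      (fun T => S ⊆ T))).card ≤ Gd.card * (n - d).choose (K - d) := by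
    rw [Finset.card_sigma]
    refine le_trans (Finset.sum_le_sum (fun S hS => card_supersets_le
      ((Finset.mem_powersetCard.1 (Finset.mem_filter.1 hS).1).2))) ?_
    rw [Finset.sum_const, smul_eq_mul]
  have h3 : (GK.sigma (fun T => T.powersetCard d)).card ≤
      (Gd.sigma (fun S => (powersetCard K (univ : Finset (Fin n))).filter
        (fun T => S ⊆ T))).card := by
    apply Finset.card_le_card_of_injOn (fun p => ⟨p.2, p.1⟩)
    · rintro ⟨T, S⟩ hp
      simp only [Finset.mem_coe] at hp ⊢
      rw [Finset.mem_sigma] at hp ⊢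
      obtain ⟨hT, hSp⟩ := hp
      rw [Finset.mem_filter, Finset.mem_powersetCard] at hT
      rw [Finset.mem_powersetCard] at hSp
      constructor
      · rw [Finset.mem_filter, Finset.mem_powersetCard]
        exact ⟨⟨Finset.subset_univ _, hSp.2⟩, isGoodSet_mono c hSp.1 hT.2⟩
      · rw [Finset.mem_filter]
        exact ⟨by rw [Finset.mem_powersetCard]; exact hT.1, hSp.1⟩
    · rintro ⟨T1, S1⟩ _ ⟨T2, S2⟩ _ he
      simp only [Sigma.mk.inj_iff] at he
      obtain ⟨rfl, hT⟩ := he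
      simp only [Sigma.mk.inj_iff, heq_eq_eq, and_true]
      exact eq_of_heq hT
  calc GK.card * K.choose d = (GK.sigma (fun T => T.powersetCard d)).card := h1.symm
    _ ≤ _ := h3
    _ ≤ Gd.card * (n - d).choose (K - d) := h2

lemma key1 {n m : ℕ} (c : Fin n → Fin m) (r d K : ℕ) (hdK : d ≤ K) (hK : K ≤ n) :
    ((powersetCard K (univ : Finset (Fin n))).filter (IsGoodSet c r)).card * n.choose d ≤
    ((powersetCard d (univ : Finset (Fin n))).filter (IsGoodSet c r)).card * n.choose K := by
  classical
  have h := double_count c r d K hdK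
  have hpos : 0 < K.choose d := Nat.choose_pos hdK
  set A := ((powersetCard K (univ : Finset (Fin n))).filter (IsGoodSet c r)).card
  set B := ((powersetCard d (univ : Finset (Fin n))).filter (IsGoodSet c r)).card
  apply Nat.le_of_mul_le_mul_right _ hpos
  calc A * n.choose d * K.choose d = A * K.choose d * n.choose d := by ring
    _ ≤ B * (n - d).choose (K - d) * n.choose d := Nat.mul_le_mul_right _ h
    _ = B * (n.choose d * (n - d).choose (K - d)) := by ring
    _ = B * (n.choose K * K.choose d) := by rw [← Nat.choose_mul (n := n) hdK]
    _ = B * n.choose K * K.choose d := by ring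

lemma sum_powerset_filter_grouped {n : ℕ} (p : Finset (Fin n) → Prop) [DecidablePred p]
    (h : ℕ → ℕ) :
    ∑ S ∈ ((univ : Finset (Fin n)).powerset.filter p), h S.card =
    ∑ d ∈ Finset.range (n + 1),
      ((powersetCard d (univ : Finset (Fin n))).filter p).card * h d := by
  classical
  have hmap : ∀ S ∈ (univ : Finset (Fin n)).powerset.filter p,
      S.card ∈ Finset.range (n + 1) := by
    intro S hS
    rw [Finset.mem_range, Nat.lt_succ_iff]
    calc S.card ≤ (univ : Finset (Fin n)).card :=
          Finset.card_le_card (Finset.mem_powerset.1 (Finset.mem_filter.1 hS).1)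
      _ = n := by simp
  rw [← Finset.sum_fiberwise_of_maps_to hmap (fun S => h S.card)]
  refine Finset.sum_congr rfl (fun d _ => ?_)
  have hset : ((univ : Finset (Fin n)).powerset.filter p).filter (fun S => S.card = d) =
      (powersetCard d (univ : Finset (Fin n))).filter p := by
    ext S
    simp only [Finset.mem_filter, Finset.mem_powerset, Finset.mem_powersetCard]
    tauto
  rw [hset]
  have hc : ∀ S ∈ (powersetCard d (univ : Finset (Fin n))).filter p, h S.card = h d := by
    intro S hS
    rw [(Finset.mem_powersetCard.1 (Finset.mem_filter.1 hS).1).2]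
  rw [Finset.sum_congr rfl hc, Finset.sum_const, smul_eq_mul]

/-- Drawing with replacement stochastically dominates drawing without replacement for
the `r`-collision time: `P(K_r^{(2)} > k) ≥ P(K_r^{(1)} > k)` for every `k`. -/
theorem collision_time_with_ge_without
    (n m k r : ℕ) (x : Fin m → ℕ) (c : Fin n → Fin m)
    (hx : ∀ i, (Finset.univ.filter (fun b : Fin n => c b = i)).card = x i)
    (hn : ∑ i, x i = n) (hr : 2 ≤ r) (hex : ∃ i, r ≤ x i) :
    (Nat.card {σ : Equiv.Perm (Fin n) // ∀ i : Fin m,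
        (Finset.univ.filter (fun t : Fin n => t.val < k ∧ c (σ t) = i)).card ≤ r - 1} : ℚ)
      / (Nat.factorial n : ℚ)
    ≤ (Nat.card {f : Fin k → Fin n // ∀ i : Fin m,
        ((Finset.image f Finset.univ).filter (fun b : Fin n => c b = i)).card ≤ r - 1} : ℚ)
      / (n ^ k : ℚ) := by
  classical
  obtain ⟨i0, hi0⟩ := hex
  have hn0 : 0 < n := by
    have hxle : x i0 ≤ n := by
      rw [← hn]
      exact Finset.single_le_sum (fun i _ => Nat.zero_le (x i)) (Finset.mem_univ i0)
    omega
  set K := min k n with hKdef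
  have hKn : K ≤ n := min_le_right _ _
  set G : ℕ → ℕ := fun d =>
    ((powersetCard d (univ : Finset (Fin n))).filter (IsGoodSet c (r - 1))).card with hGdef
  set D : Finset (Fin n) := (univ : Finset (Fin n)).filter (fun t => t.val < k) with hDdef
  have hDcard : D.card = K := card_canon n k
  set CK : Finset (Fin n) := (univ : Finset (Fin n)).filter (fun t => t.val < K) with hCKdef
  have hCKcard : CK.card = K := by
    rw [hCKdef, card_canon, min_eq_left hKn]
  -- the permutation count
  set P := ((univ : Finset (Equiv.Perm (Fin n))).filter
    (fun σ : Equiv.Perm (Fin n) => IsGoodSet c (r - 1) (D.image ⇑σ))).card with hPdef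
  have hPcard : Nat.card {σ : Equiv.Perm (Fin n) // ∀ i : Fin m,
      (Finset.univ.filter (fun t : Fin n => t.val < k ∧ c (σ t) = i)).card ≤ r - 1} = P := by
    rw [Nat.card_eq_fintype_card, Fintype.card_subtype, hPdef]
    apply congrArg Finset.card
    apply Finset.filter_congr
    intro σ _
    have hcc : ∀ i : Fin m, (Finset.univ.filter (fun t : Fin n => t.val < k ∧ c (σ t) = i)).card
        = ((D.image ⇑σ).filter (fun b => c b = i)).card := by
      intro i
      rw [Finset.filter_image, Finset.card_image_of_injective _ σ.injective, hDdef,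
        Finset.filter_filter]
    unfold IsGoodSet
    exact ⟨fun h i => (hcc i) ▸ h i, fun h i => (hcc i) ▸ h i⟩
  set Mperm := ((univ : Finset (Equiv.Perm (Fin n))).filter (fun σ : Equiv.Perm (Fin n) => D.image ⇑σ = CK)).card
    with hMdef
  have himgK : ∀ σ : Equiv.Perm (Fin n), (D.image ⇑σ).card = K := by
    intro σ
    rw [Finset.card_image_of_injective _ σ.injective, hDcard]
  have hP : P = G K * Mperm := by
    rw [hPdef, Finset.card_eq_sum_card_fiberwise (f := fun σ : Equiv.Perm (Fin n) => D.image ⇑σ)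
      (t := (powersetCard K (univ : Finset (Fin n))).filter (IsGoodSet c (r - 1)))
      (fun σ hσ => by
        rw [Finset.mem_coe, Finset.mem_filter, Finset.mem_powersetCard]
        exact ⟨⟨Finset.subset_univ _, himgK σ⟩, (Finset.mem_filter.1 hσ).2⟩)]
    refine (Finset.sum_congr rfl (fun S hS => ?_)).trans
      (by rw [Finset.sum_const, smul_eq_mul, hGdef])
    rw [Finset.mem_filter] at hS
    have hfix : (((univ : Finset (Equiv.Perm (Fin n))).filter
        (fun σ : Equiv.Perm (Fin n) => IsGoodSet c (r - 1) (D.image ⇑σ))).filter (fun σ : Equiv.Perm (Fin n) => D.image ⇑σ = S))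
        = ((univ : Finset (Equiv.Perm (Fin n))).filter (fun σ : Equiv.Perm (Fin n) => D.image ⇑σ = S)) := by
      ext σ
      simp only [Finset.mem_filter, Finset.mem_univ, true_and]
      exact ⟨fun h => h.2, fun h => ⟨h ▸ hS.2, h⟩⟩
    rw [hfix]
    exact permFiber_card (S' := CK) D (by rw [(Finset.mem_powersetCard.1 hS.1).2, hCKcard])
  have hfact : n.factorial = n.choose K * Mperm := by
    have huniv : ((univ : Finset (Equiv.Perm (Fin n))).card) = n.factorial := by
      rw [Finset.card_univ, Fintype.card_perm, Fintype.card_fin]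
    rw [← huniv, Finset.card_eq_sum_card_fiberwise (f := fun σ : Equiv.Perm (Fin n) => D.image ⇑σ)
      (t := powersetCard K (univ : Finset (Fin n)))
      (fun σ _ => by rw [Finset.mem_coe, Finset.mem_powersetCard]; exact ⟨Finset.subset_univ _, himgK σ⟩)]
    refine (Finset.sum_congr rfl (fun S hS => permFiber_card (S' := CK) D
      (by rw [(Finset.mem_powersetCard.1 hS).2, hCKcard]))).trans ?_
    rw [Finset.sum_const, smul_eq_mul, Finset.card_powersetCard, Finset.card_univ,
      Fintype.card_fin]
  -- the function count
  set Nfun : ℕ → ℕ := fun d => ((univ : Finset (Fin k → Fin n)).filter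
    (fun f => Finset.image f univ = (univ : Finset (Fin n)).filter (fun t => t.val < d))).card
    with hNdef
  set Q := ((univ : Finset (Fin k → Fin n)).filter
    (fun f => IsGoodSet c (r - 1) (Finset.image f univ))).card with hQdef
  have hQcard : Nat.card {f : Fin k → Fin n // ∀ i : Fin m,
      ((Finset.image f Finset.univ).filter (fun b : Fin n => c b = i)).card ≤ r - 1} = Q := by
    rw [Nat.card_eq_fintype_card, Fintype.card_subtype, hQdef]
    apply congrArg Finset.card
    exact Finset.filter_congr (fun f _ => Iff.rfl)
  have hfib : ∀ S : Finset (Fin n), S ⊆ univ →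
      ((univ : Finset (Fin k → Fin n)).filter (fun f => Finset.image f univ = S)).card
        = Nfun S.card := by
    intro S hSsub
    rw [hNdef]
    refine funFiber_card k ?_
    rw [card_canon, min_eq_left]
    calc S.card ≤ (univ : Finset (Fin n)).card := Finset.card_le_card hSsub
      _ = n := by simp
  have hQ : Q = ∑ d ∈ Finset.range (n + 1), G d * Nfun d := by
    rw [hQdef, Finset.card_eq_sum_card_fiberwise (f := fun f => Finset.image f univ)
      (t := ((univ : Finset (Fin n)).powerset.filter (IsGoodSet c (r - 1))))
      (fun f hf => by
        rw [Finset.mem_coe, Finset.mem_filter, Finset.mem_powerset]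
        exact ⟨Finset.subset_univ _, (Finset.mem_filter.1 hf).2⟩)]
    have hstep : ∀ S ∈ ((univ : Finset (Fin n)).powerset.filter (IsGoodSet c (r - 1))),
        (((univ : Finset (Fin k → Fin n)).filter
          (fun f => IsGoodSet c (r - 1) (Finset.image f univ))).filter
            (fun f => Finset.image f univ = S)).card = Nfun S.card := by
      intro S hS
      rw [Finset.mem_filter] at hS
      have hfix : (((univ : Finset (Fin k → Fin n)).filter
          (fun f => IsGoodSet c (r - 1) (Finset.image f univ))).filter
            (fun f => Finset.image f univ = S))
          = ((univ : Finset (Fin k → Fin n)).filter (fun f => Finset.image f univ = S)) := by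
        ext f
        simp only [Finset.mem_filter, Finset.mem_univ, true_and]
        exact ⟨fun h => h.2, fun h => ⟨h ▸ hS.2, h⟩⟩
      rw [hfix]
      exact hfib S (Finset.mem_powerset.1 hS.1)
    rw [Finset.sum_congr rfl hstep, sum_powerset_filter_grouped (IsGoodSet c (r - 1)) Nfun,
      hGdef]
  have hnk : n ^ k = ∑ d ∈ Finset.range (n + 1), n.choose d * Nfun d := by
    have huniv : ((univ : Finset (Fin k → Fin n)).card) = n ^ k := by
      rw [Finset.card_univ]
      simp [Fintype.card_fun]
    rw [← huniv, Finset.card_eq_sum_card_fiberwise (f := fun f => Finset.image f univ)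
      (t := ((univ : Finset (Fin n)).powerset.filter (fun _ => True)))
      (fun f _ => by
        rw [Finset.mem_coe, Finset.mem_filter, Finset.mem_powerset]
        exact ⟨Finset.subset_univ _, trivial⟩)]
    have hstep : ∀ S ∈ ((univ : Finset (Fin n)).powerset.filter (fun _ => True)),
        (((univ : Finset (Fin k → Fin n))).filter (fun f => Finset.image f univ = S)).card
          = Nfun S.card := by
      intro S hS
      rw [Finset.mem_filter, Finset.mem_powerset] at hS
      exact hfib S hS.1
    rw [Finset.sum_congr rfl hstep,
      sum_powerset_filter_grouped (fun _ => True) Nfun]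
    refine Finset.sum_congr rfl (fun d _ => ?_)
    congr 1
    rw [Finset.filter_true, Finset.card_powersetCard, Finset.card_univ, Fintype.card_fin]
  -- termwise comparison
  have hterm : ∀ d ∈ Finset.range (n + 1),
      G K * (n.choose d * Nfun d) ≤ n.choose K * (G d * Nfun d) := by
    intro d hd
    rcases le_or_gt d K with h | h
    · have hkey := key1 c (r - 1) d K h hKn
      calc G K * (n.choose d * Nfun d) = (G K * n.choose d) * Nfun d := by ring
        _ ≤ (G d * n.choose K) * Nfun d := Nat.mul_le_mul_right _ hkey
        _ = n.choose K * (G d * Nfun d) := by ring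
    · have hkd : k < d := by
        rw [Finset.mem_range] at hd
        omega
      have hNzero : Nfun d = 0 := by
        rw [hNdef]
        rw [Finset.card_eq_zero, Finset.filter_eq_empty_iff]
        intro f _
        intro hf
        have h1 : (Finset.image f univ).card ≤ k :=
          le_trans Finset.card_image_le (by simp)
        rw [hf, card_canon] at h1
        rw [Finset.mem_range] at hd
        omega
      simp [hNzero]
  have hsum : G K * n ^ k ≤ n.choose K * Q := by
    rw [hnk, hQ, Finset.mul_sum, Finset.mul_sum]
    exact Finset.sum_le_sum hterm
  have hmain : P * n ^ k ≤ Q * n.factorial := by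
    calc P * n ^ k = (G K * n ^ k) * Mperm := by rw [hP]; ring
      _ ≤ (n.choose K * Q) * Mperm := Nat.mul_le_mul_right _ hsum
      _ = Q * n.factorial := by rw [hfact]; ring
  rw [hPcard, hQcard, div_le_div_iff₀ (by exact_mod_cast Nat.factorial_pos n)
    (by positivity)]
  exact_mod_cast hmain
end

section
/- For r = 2 and any configuration (x_1,...,x_m) with n = sum x_i: P(R_2 > k) = (n!/((n-k)! n^k)) · P(K_2^{(1)} > k) for all k ≤ n; consequently P(K_2^{(1)} > k) ≥ P(R_2 > k). -/
open Finset

lemma fiber_card_s10 {n k : ℕ} (hk : k ≤ n) (f : Fin k → Fin n) (hf : Function.Injective f) :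
    Nat.card {σ : Equiv.Perm (Fin n) // ∀ t : Fin k, σ (Fin.castLE hk t) = f t}
      = (n - k).factorial := by
  classical
  have hc : Function.Injective (Fin.castLE hk) := Fin.castLE_injective hk
  let e₀ : Set.range (Fin.castLE hk) ≃ Set.range f :=
    (Equiv.ofInjective _ hc).symm.trans (Equiv.ofInjective f hf)
  have key : {σ : Equiv.Perm (Fin n) // ∀ t : Fin k, σ (Fin.castLE hk t) = f t}
      ≃ (((Set.range (Fin.castLE hk))ᶜ : Set (Fin n)) ≃ ((Set.range f)ᶜ : Set (Fin n))) := by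
    refine (Equiv.subtypeEquivRight ?_).trans (Equiv.Set.compl e₀)
    intro σ
    constructor
    · rintro h ⟨_, t, rfl⟩
      simp [e₀, h t]
    · intro h t
      simpa [e₀] using h ⟨Fin.castLE hk t, t, rfl⟩
  have h1 : Fintype.card ((Set.range (Fin.castLE hk))ᶜ : Set (Fin n)) = n - k := by
    rw [Fintype.card_compl_set, Set.card_range_of_injective hc]; simp
  have h2 : Fintype.card ((Set.range f)ᶜ : Set (Fin n)) = n - k := by
    rw [Fintype.card_compl_set, Set.card_range_of_injective hf]; simp
  rw [Nat.card_congr key, Nat.card_eq_fintype_card,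
    Fintype.card_equiv (Fintype.equivOfCardEq (h1.trans h2.symm)), h1]

lemma filter_card_eq {n k : ℕ} (hk : k ≤ n) (p : Fin n → Prop) [DecidablePred p] :
    (univ.filter (fun t : Fin n => t.val < k ∧ p t)).card
      = (univ.filter (fun t : Fin k => p (Fin.castLE hk t))).card := by
  rw [eq_comm]
  apply Finset.card_bij (fun t _ => Fin.castLE hk t)
  · intro a ha
    simp only [mem_filter, mem_univ, true_and] at ha ⊢
    exact ⟨a.isLt, ha⟩
  · intro a _ b _ h
    exact Fin.castLE_injective hk h
  · intro b hb
    simp only [mem_filter, mem_univ, true_and] at hb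
    exact ⟨⟨b.val, hb.1⟩, by simpa using hb.2, by ext; rfl⟩

lemma count_eq {n m k : ℕ} (hk : k ≤ n) (c : Fin n → Fin m) :
    Nat.card {σ : Equiv.Perm (Fin n) // ∀ i : Fin m,
        (Finset.univ.filter (fun t : Fin n => t.val < k ∧ c (σ t) = i)).card ≤ 1}
      = Nat.card {f : Fin k → Fin n // ∀ i : Fin m,
          (Finset.univ.filter (fun t : Fin k => c (f t) = i)).card ≤ 1}
        * (n - k).factorial := by
  classical
  -- P σ ↔ Q (σ ∘ castLE)
  have hPQ : ∀ σ : Equiv.Perm (Fin n), ∀ i : Fin m,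
      (Finset.univ.filter (fun t : Fin n => t.val < k ∧ c (σ t) = i)).card
        = (Finset.univ.filter (fun t : Fin k => c (σ (Fin.castLE hk t)) = i)).card :=
    fun σ i => filter_card_eq hk (fun t => c (σ t) = i)
  -- Q implies injective
  have hQinj : ∀ f : Fin k → Fin n, (∀ i : Fin m,
      (Finset.univ.filter (fun t : Fin k => c (f t) = i)).card ≤ 1) →
      Function.Injective f := by
    intro f hf a b hab
    by_contra hne
    have h2 : ({a, b} : Finset (Fin k)) ⊆
        Finset.univ.filter (fun t : Fin k => c (f t) = c (f a)) := by
      intro t ht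
      simp only [mem_insert, mem_singleton] at ht
      rcases ht with rfl | rfl <;> simp [hab]
    have := Finset.card_le_card h2
    rw [Finset.card_pair hne] at this
    exact absurd (this.trans (hf (c (f a)))) (by norm_num)
  rw [Nat.card_eq_fintype_card, Nat.card_eq_fintype_card, Fintype.card_subtype,
    Fintype.card_subtype]
  rw [Finset.card_eq_sum_card_fiberwise (f := fun σ : Equiv.Perm (Fin n) =>
      (fun t : Fin k => σ (Fin.castLE hk t)))
    (t := Finset.univ.filter (fun f : Fin k → Fin n => ∀ i : Fin m,
      (Finset.univ.filter (fun t : Fin k => c (f t) = i)).card ≤ 1))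
    (by intro σ hσ
        simp only [mem_coe, mem_filter, mem_univ, true_and] at hσ ⊢
        intro i
        rw [← hPQ σ i]
        exact hσ i)]
  rw [Finset.sum_congr rfl (fun f hf => ?_), Finset.sum_const, smul_eq_mul]
  simp only [mem_filter, mem_univ, true_and] at hf
  have hfin : Function.Injective f := hQinj f hf
  have : (Finset.univ.filter (fun σ : Equiv.Perm (Fin n) => ∀ i : Fin m,
        (Finset.univ.filter (fun t : Fin n => t.val < k ∧ c (σ t) = i)).card ≤ 1)).filter
        (fun σ => (fun t : Fin k => σ (Fin.castLE hk t)) = f)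
      = Finset.univ.filter (fun σ : Equiv.Perm (Fin n) =>
          ∀ t : Fin k, σ (Fin.castLE hk t) = f t) := by
    ext σ
    simp only [mem_filter, mem_univ, true_and, funext_iff]
    constructor
    · exact fun h => h.2
    · intro h
      refine ⟨fun i => ?_, h⟩
      rw [hPQ σ i]
      calc (Finset.univ.filter (fun t : Fin k => c (σ (Fin.castLE hk t)) = i)).card
          = (Finset.univ.filter (fun t : Fin k => c (f t) = i)).card := by
            congr 1; ext t; simp [h t]
        _ ≤ 1 := hf i
  rw [this, ← Fintype.card_subtype, ← Nat.card_eq_fintype_card, fiber_card_s10 hk f hfin]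


/-- For `r = 2`: `P(R_2 > k) = (n!/((n-k)! n^k)) · P(K_2^{(1)} > k)` for `k ≤ n`,
and consequently `P(K_2^{(1)} > k) ≥ P(R_2 > k)`. -/
theorem repetition_vs_collision_r_two
    (n m k : ℕ) (x : Fin m → ℕ) (c : Fin n → Fin m)
    (hx : ∀ i, (Finset.univ.filter (fun b : Fin n => c b = i)).card = x i)
    (hn : ∑ i, x i = n) (hk : k ≤ n) :
    ((Nat.card {f : Fin k → Fin n // ∀ i : Fin m,
          (Finset.univ.filter (fun t : Fin k => c (f t) = i)).card ≤ 1} : ℚ)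
        / (n ^ k : ℚ)
      = ((Nat.factorial n : ℚ) / ((Nat.factorial (n - k) : ℚ) * (n ^ k : ℚ))) *
          ((Nat.card {σ : Equiv.Perm (Fin n) // ∀ i : Fin m,
              (Finset.univ.filter (fun t : Fin n => t.val < k ∧ c (σ t) = i)).card ≤ 1} : ℚ)
            / (Nat.factorial n : ℚ)))
    ∧ (Nat.card {f : Fin k → Fin n // ∀ i : Fin m,
          (Finset.univ.filter (fun t : Fin k => c (f t) = i)).card ≤ 1} : ℚ)
        / (n ^ k : ℚ)
      ≤ (Nat.card {σ : Equiv.Perm (Fin n) // ∀ i : Fin m,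
          (Finset.univ.filter (fun t : Fin n => t.val < k ∧ c (σ t) = i)).card ≤ 1} : ℚ)
        / (Nat.factorial n : ℚ) := by
  have hB := count_eq hk c
  set A : ℕ := Nat.card {f : Fin k → Fin n // ∀ i : Fin m,
      (Finset.univ.filter (fun t : Fin k => c (f t) = i)).card ≤ 1} with hA
  set B : ℕ := Nat.card {σ : Equiv.Perm (Fin n) // ∀ i : Fin m,
      (Finset.univ.filter (fun t : Fin n => t.val < k ∧ c (σ t) = i)).card ≤ 1} with hBdef
  have hnk : (0 : ℚ) < (n ^ k : ℚ) := by
    have h0 : n ^ k ≠ 0 := by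
      rcases Nat.eq_zero_or_pos n with h | h
      · subst h; rw [Nat.le_zero.mp hk]; simp
      · positivity
    exact_mod_cast Nat.pos_of_ne_zero h0
  have hfact : (0 : ℚ) < (Nat.factorial n : ℚ) := by
    exact_mod_cast Nat.factorial_pos n
  have hfact2 : ((Nat.factorial (n - k) : ℚ)) ≠ 0 := by
    exact_mod_cast (Nat.factorial_pos (n - k)).ne'
  constructor
  · rw [hB]
    push_cast
    field_simp
  · rw [div_le_div_iff₀ hnk hfact, hB]
    have hnat : A * Nat.factorial n ≤ A * Nat.factorial (n - k) * n ^ k := by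
      rw [← Nat.factorial_mul_descFactorial hk, ← Nat.mul_assoc, Nat.mul_assoc]
      exact Nat.mul_le_mul_left _ (Nat.mul_le_mul_left _ (Nat.descFactorial_le_pow n k)) |>.trans_eq (by ring)
    exact_mod_cast hnat
end

section
/- The expected r-repetition time for drawing with replacement from configuration (x_1,...,x_m) satisfies E(R_r) = n ∫_0^∞ e^{-ns} ∏_{i=1}^m q_r(x_i s) ds, where q_r(t) = sum_{i=0}^{r-1} t^i/i!. -/
open Finset MeasureTheory

/-- `q_r(t) = ∑_{i=0}^{r-1} t^i/i!` as a real function. -/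
noncomputable def qrR (r : ℕ) (t : ℝ) : ℝ :=
  ∑ i ∈ Finset.range r, t ^ i / (Nat.factorial i : ℝ)

open MvPolynomial in
lemma prod_X_pow_univ {m : ℕ} (e : Fin m → ℕ) :
    (∏ i, (X i : MvPolynomial (Fin m) ℕ) ^ e i)
      = monomial (Finsupp.equivFunOnFinite.symm e) 1 := by
  rw [← prod_X_pow_eq_monomial]
  refine (Finset.prod_subset (Finset.subset_univ _) ?_).symm
  intro i _ hi
  have : e i = 0 := by
    by_contra h
    exact hi (Finsupp.mem_support_iff.mpr (by simpa using h))
  simp [Finsupp.coe_equivFunOnFinite_symm, this]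

open MvPolynomial in
lemma count_fiber_eq_multinomial {m k : ℕ} (j : Fin m → ℕ) (hj : ∑ i, j i = k) :
    (Finset.univ.filter fun g : Fin k → Fin m =>
        ∀ i, (Finset.univ.filter fun t => g t = i).card = j i).card
      = Nat.multinomial Finset.univ j := by
  have key : ((∑ i, X i : MvPolynomial (Fin m) ℕ)) ^ k
      = ∑ g : Fin k → Fin m, ∏ i, (X i : MvPolynomial (Fin m) ℕ)
          ^ (Finset.univ.filter fun t => g t = i).card := by
    have h1 : ((∑ i, X i : MvPolynomial (Fin m) ℕ)) ^ k
        = ∏ _t : Fin k, (∑ i, X i : MvPolynomial (Fin m) ℕ) := by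
      simp [Finset.prod_const]
    rw [h1, Finset.prod_univ_sum]
    rw [Fintype.piFinset_univ]
    refine Finset.sum_congr rfl fun g _ => ?_
    rw [← Finset.prod_fiberwise_of_maps_to (fun t _ => Finset.mem_univ (g t))
      (fun t => (X (g t) : MvPolynomial (Fin m) ℕ))]
    refine Finset.prod_congr rfl fun i _ => ?_
    rw [Finset.prod_congr rfl (fun t ht => by
      rw [(Finset.mem_filter.mp ht).2]), Finset.prod_const]
  have key2 := Finset.sum_pow_eq_sum_piAntidiag Finset.univ
    (fun i => (X i : MvPolynomial (Fin m) ℕ)) k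
  set D : Fin m →₀ ℕ := Finsupp.equivFunOnFinite.symm j with hD
  have hcoeff1 : coeff D (((∑ i, X i : MvPolynomial (Fin m) ℕ)) ^ k)
      = (Finset.univ.filter fun g : Fin k → Fin m =>
          ∀ i, (Finset.univ.filter fun t => g t = i).card = j i).card := by
    rw [key, coeff_sum]
    rw [Finset.card_filter]
    refine Finset.sum_congr rfl fun g _ => ?_
    rw [prod_X_pow_univ, coeff_monomial]
    have : (Finsupp.equivFunOnFinite.symm
        (fun i => (Finset.univ.filter fun t => g t = i).card) = D)
        ↔ ∀ i, (Finset.univ.filter fun t => g t = i).card = j i := by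
      rw [hD, Equiv.apply_eq_iff_eq, funext_iff]
    simp only [this]
  have hcoeff2 : coeff D (((∑ i, X i : MvPolynomial (Fin m) ℕ)) ^ k)
      = Nat.multinomial Finset.univ j := by
    rw [key2, coeff_sum]
    have hjmem : j ∈ Finset.piAntidiag Finset.univ k := by
      rw [Finset.mem_piAntidiag]
      exact ⟨hj, fun i _ => Finset.mem_univ i⟩
    rw [Finset.sum_eq_single_of_mem j hjmem]
    · rw [prod_X_pow_univ]
      have : ((Nat.multinomial Finset.univ j : ℕ) : MvPolynomial (Fin m) ℕ)
          = C (Nat.multinomial Finset.univ j) := by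
        simp
      rw [this, coeff_C_mul, coeff_monomial, if_pos rfl, mul_one]
    · intro j' _ hj'
      rw [prod_X_pow_univ]
      have : ((Nat.multinomial Finset.univ j' : ℕ) : MvPolynomial (Fin m) ℕ)
          = C (Nat.multinomial Finset.univ j') := by simp
      rw [this, coeff_C_mul, coeff_monomial, if_neg, mul_zero]
      rw [hD]
      exact fun h => hj' (Finsupp.equivFunOnFinite.symm.injective h)
  rw [← hcoeff1, hcoeff2]

lemma card_good_eq (n m r k : ℕ) (x : Fin m → ℕ) (c : Fin n → Fin m)
    (hx : ∀ i, (Finset.univ.filter (fun b : Fin n => c b = i)).card = x i)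
    (hr1 : 1 ≤ r) :
    Nat.card {f : Fin k → Fin n // ∀ i : Fin m,
        (Finset.univ.filter (fun t : Fin k => c (f t) = i)).card ≤ r - 1}
      = ∑ j ∈ (Fintype.piFinset fun _ : Fin m => Finset.range r).filter
            (fun j => ∑ i, j i = k),
          Nat.multinomial Finset.univ j * ∏ i, x i ^ j i := by
  classical
  rw [Nat.card_eq_fintype_card, Fintype.card_subtype]
  set Q : Finset (Fin k → Fin m) := Finset.univ.filter
      (fun g => ∀ i, (Finset.univ.filter fun t => g t = i).card ≤ r - 1) with hQ
  have hmap : ∀ f ∈ (Finset.univ.filter fun f : Fin k → Fin n =>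
      ∀ i, (Finset.univ.filter (fun t : Fin k => c (f t) = i)).card ≤ r - 1),
      (c ∘ f) ∈ Q := by
    intro f hf
    rw [hQ, Finset.mem_filter]
    exact ⟨Finset.mem_univ _, (Finset.mem_filter.mp hf).2⟩
  rw [Finset.card_eq_sum_card_fiberwise hmap]
  have hinner : ∀ g : Fin k → Fin m,
      ((Finset.univ.filter fun f : Fin k → Fin n =>
          ∀ i, (Finset.univ.filter (fun t : Fin k => c (f t) = i)).card ≤ r - 1).filter
        (fun f => c ∘ f = g)).card
      = if g ∈ Q then ∏ i, x i ^ (Finset.univ.filter fun t => g t = i).card else 0 := by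
    intro g
    by_cases hg : g ∈ Q
    · rw [if_pos hg]
      have hset : ((Finset.univ.filter fun f : Fin k → Fin n =>
          ∀ i, (Finset.univ.filter (fun t : Fin k => c (f t) = i)).card ≤ r - 1).filter
            (fun f => c ∘ f = g))
          = Fintype.piFinset (fun t => Finset.univ.filter fun b : Fin n => c b = g t) := by
        ext f
        simp only [Finset.mem_filter, Finset.mem_univ, true_and,
          Fintype.mem_piFinset, funext_iff, Function.comp_apply]
        constructor
        · exact fun h t => by simpa using h.2 t
        · intro h
          refine ⟨fun i => ?_, fun t => by simpa using h t⟩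
          have hq := (Finset.mem_filter.mp hg).2 i
          have heq : (Finset.univ.filter fun t : Fin k => c (f t) = i)
              = (Finset.univ.filter fun t : Fin k => g t = i) := by
            apply Finset.filter_congr
            intro t _
            simp [h t]
          rw [heq]
          exact hq
      rw [hset, Fintype.card_piFinset]
      have : ∀ t, (Finset.univ.filter fun b : Fin n => c b = g t).card = x (g t) :=
        fun t => hx (g t)
      rw [Finset.prod_congr rfl fun t _ => this t]
      rw [← Finset.prod_fiberwise_of_maps_to (fun t (_ : t ∈ Finset.univ) =>
        Finset.mem_univ (g t)) (fun t => x (g t))]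
      refine Finset.prod_congr rfl fun i _ => ?_
      rw [Finset.prod_congr rfl (fun t ht => by rw [(Finset.mem_filter.mp ht).2]),
        Finset.prod_const]
    · rw [if_neg hg]
      rw [Finset.card_eq_zero, Finset.filter_eq_empty_iff]
      intro f hf
      intro hcf
      exact hg (hcf ▸ hmap f hf)
  rw [Finset.sum_congr rfl fun g hg => hinner g]
  rw [Finset.sum_ite_of_true (fun g hg => hg)]
  set T : Finset (Fin m → ℕ) := (Fintype.piFinset fun _ : Fin m => Finset.range r).filter
      (fun j => ∑ i, j i = k) with hT
  have hsumfib : ∀ g : Fin k → Fin m, ∑ i, (Finset.univ.filter fun t => g t = i).card = k := by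
    intro g
    have := Finset.card_eq_sum_card_fiberwise
      (fun t (_ : t ∈ (Finset.univ : Finset (Fin k))) => Finset.mem_univ (g t))
    simpa using this.symm
  have hmap2 : ∀ g ∈ Q, (fun i => (Finset.univ.filter fun t => g t = i).card) ∈ T := by
    intro g hg
    rw [hT, Finset.mem_filter, Fintype.mem_piFinset]
    refine ⟨fun i => ?_, hsumfib g⟩
    have := (Finset.mem_filter.mp hg).2 i
    rw [Finset.mem_range]
    omega
  rw [← Finset.sum_fiberwise_of_maps_to hmap2
    (fun g => ∏ i, x i ^ (Finset.univ.filter fun t => g t = i).card)]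
  refine Finset.sum_congr rfl fun j hj => ?_
  rw [hT, Finset.mem_filter, Fintype.mem_piFinset] at hj
  have hfil : Q.filter (fun g => (fun i => (Finset.univ.filter fun t => g t = i).card) = j)
      = Finset.univ.filter fun g : Fin k → Fin m =>
          ∀ i, (Finset.univ.filter fun t => g t = i).card = j i := by
    ext g
    simp only [Finset.mem_filter, hQ, Finset.mem_univ, true_and, funext_iff]
    constructor
    · exact fun h => h.2
    · intro h
      refine ⟨fun i => ?_, h⟩
      have := hj.1 i
      rw [Finset.mem_range] at this
      rw [h i]
      omega
  calc ∑ g ∈ Q.filter (fun g =>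
          (fun i => (Finset.univ.filter fun t => g t = i).card) = j),
        ∏ i, x i ^ (Finset.univ.filter fun t => g t = i).card
      = ∑ _g ∈ Q.filter (fun g =>
          (fun i => (Finset.univ.filter fun t => g t = i).card) = j),
        ∏ i, x i ^ j i := by
        refine Finset.sum_congr rfl fun g hg => ?_
        have := (Finset.mem_filter.mp hg).2
        rw [funext_iff] at this
        exact Finset.prod_congr rfl fun i _ => by rw [this i]
    _ = Nat.multinomial Finset.univ j * ∏ i, x i ^ j i := by
        rw [Finset.sum_const, hfil, count_fiber_eq_multinomial j hj.2, smul_eq_mul]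

lemma prod_qrR_eq (m r : ℕ) (x : Fin m → ℕ) (s : ℝ) :
    ∏ i, qrR r ((x i : ℝ) * s)
      = ∑ k ∈ Finset.range (m * (r - 1) + 1),
          (((∑ j ∈ (Fintype.piFinset fun _ : Fin m => Finset.range r).filter
              (fun j => ∑ i, j i = k),
            Nat.multinomial Finset.univ j * ∏ i, x i ^ j i : ℕ) : ℝ) / k.factorial) * s ^ k := by
  unfold qrR
  rw [Finset.prod_univ_sum]
  have hstep : ∀ p : Fin m → ℕ,
      (∏ i, ((x i : ℝ) * s) ^ p i / (Nat.factorial (p i) : ℝ))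
      = (∏ i, ((x i : ℝ) ^ p i / (Nat.factorial (p i) : ℝ))) * s ^ (∑ i, p i) := by
    intro p
    rw [← Finset.prod_pow_eq_pow_sum, ← Finset.prod_mul_distrib]
    refine Finset.prod_congr rfl fun i _ => ?_
    rw [mul_pow]
    ring
  rw [Finset.sum_congr rfl fun p _ => hstep p]
  have hmap : ∀ p ∈ Fintype.piFinset fun _ : Fin m => Finset.range r,
      (∑ i, p i) ∈ Finset.range (m * (r - 1) + 1) := by
    intro p hp
    rw [Fintype.mem_piFinset] at hp
    rw [Finset.mem_range]
    have : ∑ i, p i ≤ ∑ _i : Fin m, (r - 1) := by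
      refine Finset.sum_le_sum fun i _ => ?_
      have := hp i
      rw [Finset.mem_range] at this
      omega
    simp only [Finset.sum_const, Finset.card_univ, Fintype.card_fin, smul_eq_mul] at this
    omega
  rw [← Finset.sum_fiberwise_of_maps_to hmap]
  refine Finset.sum_congr rfl fun k hk => ?_
  push_cast
  rw [Finset.sum_div, Finset.sum_mul]
  refine Finset.sum_congr rfl fun p hp => ?_
  rw [Finset.mem_filter] at hp
  rw [hp.2]
  congr 1
  have hspec := Nat.multinomial_spec Finset.univ p
  rw [hp.2] at hspec
  have hspecR : ((∏ i, Nat.factorial (p i) : ℕ) : ℝ) * (Nat.multinomial Finset.univ p : ℝ)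
      = (Nat.factorial k : ℝ) := by exact_mod_cast hspec
  rw [Finset.prod_div_distrib]
  rw [eq_div_iff (by positivity : (Nat.factorial k : ℝ) ≠ 0)]
  rw [← hspecR]
  push_cast
  have hne : (∏ i, (Nat.factorial (p i) : ℝ)) ≠ 0 := by positivity
  field_simp

lemma integrableOn_exp_pow (n k : ℕ) (hn : 0 < n) :
    IntegrableOn (fun s : ℝ => Real.exp (-(n:ℝ) * s) * s ^ k) (Set.Ioi 0) := by
  have h := integrableOn_rpow_mul_exp_neg_mul_rpow (s := (k:ℝ)) (p := 1) (b := (n:ℝ))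
    (lt_of_lt_of_le (by norm_num) (Nat.cast_nonneg k)) one_pos (by exact_mod_cast hn)
  refine h.congr_fun ?_ measurableSet_Ioi
  intro t ht
  dsimp only
  rw [Real.rpow_one, Real.rpow_natCast, mul_comm, neg_mul]

lemma integral_exp_pow (n k : ℕ) (hn : 0 < n) :
    (∫ s in Set.Ioi (0:ℝ), Real.exp (-(n:ℝ) * s) * s ^ k)
      = (Nat.factorial k : ℝ) / (n:ℝ) ^ (k+1) := by
  have h := Real.integral_rpow_mul_exp_neg_mul_Ioi
    (a := ((k:ℝ) + 1)) (r := (n:ℝ)) (by positivity) (by exact_mod_cast hn)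
  have heq : ∀ t ∈ Set.Ioi (0:ℝ),
      t ^ ((k:ℝ) + 1 - 1) * Real.exp (-((n:ℝ) * t)) = Real.exp (-(n:ℝ) * t) * t ^ k := by
    intro t ht
    rw [add_sub_cancel_right, Real.rpow_natCast, mul_comm, neg_mul]
  rw [setIntegral_congr_fun measurableSet_Ioi heq] at h
  rw [h, Real.Gamma_nat_eq_factorial]
  have h1 : ((k:ℝ) + 1) = ((k + 1 : ℕ) : ℝ) := by push_cast; ring
  rw [h1, Real.rpow_natCast, div_pow, one_pow]
  ring

/-- Expected `r`-repetition time for sampling with replacement: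
`E(R_r) = n ∫_0^∞ e^{-ns} ∏_i q_r(x_i s) ds`
(the expectation is written as `∑_{k≥0} P(R_r > k)`). -/
theorem expected_repetition_time_integral
    (n m r : ℕ) (x : Fin m → ℕ) (c : Fin n → Fin m)
    (hx : ∀ i, (Finset.univ.filter (fun b : Fin n => c b = i)).card = x i)
    (hn : ∑ i, x i = n) (hr : 2 ≤ r) (hex : ∃ i, r ≤ x i) :
    (∑' k : ℕ,
        ((Nat.card {f : Fin k → Fin n // ∀ i : Fin m,
            (Finset.univ.filter (fun t : Fin k => c (f t) = i)).card ≤ r - 1} : ℝ)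
          / (n ^ k : ℝ)))
    = n * ∫ s in Set.Ioi (0:ℝ), Real.exp (-(n : ℝ) * s) * ∏ i, qrR r ((x i : ℝ) * s) := by
  classical
  have hn0 : 0 < n := by
    obtain ⟨i, hi⟩ := hex
    have h2 : x i ≤ ∑ i, x i :=
      Finset.single_le_sum (fun _ _ => Nat.zero_le _) (Finset.mem_univ i)
    omega
  set A : ℕ → ℕ := fun k => ∑ j ∈ (Fintype.piFinset fun _ : Fin m => Finset.range r).filter
      (fun j => ∑ i, j i = k), Nat.multinomial Finset.univ j * ∏ i, x i ^ j i with hA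
  have hcard : ∀ k, Nat.card {f : Fin k → Fin n // ∀ i : Fin m,
      (Finset.univ.filter (fun t : Fin k => c (f t) = i)).card ≤ r - 1} = A k :=
    fun k => card_good_eq n m r k x c hx (by omega)
  have hA0 : ∀ k, m * (r - 1) + 1 ≤ k → A k = 0 := by
    intro k hk
    rw [hA]
    apply Finset.sum_eq_zero
    intro j hj
    rw [Finset.mem_filter, Fintype.mem_piFinset] at hj
    exfalso
    have hle : ∑ i, j i ≤ ∑ _i : Fin m, (r - 1) := by
      refine Finset.sum_le_sum fun i _ => ?_
      have := hj.1 i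
      rw [Finset.mem_range] at this
      omega
    simp only [Finset.sum_const, Finset.card_univ, Fintype.card_fin, smul_eq_mul] at hle
    omega
  have hLHS : (∑' k : ℕ,
        ((Nat.card {f : Fin k → Fin n // ∀ i : Fin m,
            (Finset.univ.filter (fun t : Fin k => c (f t) = i)).card ≤ r - 1} : ℝ)
          / (n ^ k : ℝ)))
      = ∑ k ∈ Finset.range (m * (r - 1) + 1), (A k : ℝ) / (n:ℝ) ^ k := by
    rw [tsum_eq_sum (s := Finset.range (m * (r - 1) + 1)) ?_]
    · exact Finset.sum_congr rfl fun k _ => by rw [hcard k]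
    · intro k hk
      rw [Finset.mem_range, not_lt] at hk
      rw [hcard k, hA0 k hk]
      simp
  rw [hLHS]
  have hint : ∀ s ∈ Set.Ioi (0:ℝ), Real.exp (-(n:ℝ) * s) * ∏ i, qrR r ((x i : ℝ) * s)
      = ∑ k ∈ Finset.range (m * (r - 1) + 1),
          ((A k : ℝ) / k.factorial) * (Real.exp (-(n:ℝ) * s) * s ^ k) := by
    intro s _
    rw [prod_qrR_eq m r x s, Finset.mul_sum]
    exact Finset.sum_congr rfl fun k _ => by rw [hA]; ring
  rw [setIntegral_congr_fun measurableSet_Ioi hint]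
  rw [integral_finset_sum _ (fun k _ => ((integrableOn_exp_pow n k hn0).const_mul _))]
  rw [Finset.mul_sum]
  refine Finset.sum_congr rfl fun k _ => ?_
  rw [integral_const_mul, integral_exp_pow n k hn0]
  have hkf : (Nat.factorial k : ℝ) ≠ 0 := by positivity
  have hnne : (n:ℝ) ≠ 0 := by positivity
  field_simp
  ring
end

section
/- If exactly one index i has x_i ≥ r, with x_i = x, then E(K_r^{(1)}) = r(n+1)/(x+1) and E(K_r^{(2)}) = n · sum_{i=0}^{r-1} 1/(x-i). -/
open Finset


lemma sum_choose_mul_choose (n j : ℕ) :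
    ∀ i, ∑ u ∈ range (n+1), Nat.choose u j * Nat.choose (n-u) i
      = Nat.choose (n+1) (i+j+1) := by
  induction n with
  | zero =>
    intro i
    rw [range_one, sum_singleton]
    rcases Nat.eq_zero_or_pos j with hj | hj
    · rcases Nat.eq_zero_or_pos i with hi | hi
      · simp [hi, hj]
      · subst hj
        rw [Nat.choose_eq_zero_of_lt hi, Nat.choose_eq_zero_of_lt (show 1 < i+0+1 by omega)]
        simp
    · rw [Nat.choose_eq_zero_of_lt hj, Nat.choose_eq_zero_of_lt (show 1 < i+j+1 by omega)]
      simp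
  | succ n ih =>
    intro i
    rw [Finset.sum_range_succ]
    cases i with
    | zero =>
      simp only [Nat.choose_zero_right, mul_one, Nat.sub_self]
      have h1 : ∑ u ∈ range (n+1), Nat.choose u j
          = ∑ u ∈ range (n+1), Nat.choose u j * Nat.choose (n-u) 0 := by
        simp
      rw [h1, ih 0]
      have h2 : Nat.choose (n+2) (j+1) = Nat.choose (n+1) j + Nat.choose (n+1) (j+1) :=
        Nat.choose_succ_succ (n+1) j
      show Nat.choose (n+1) (0+j+1) + Nat.choose (n+1) j = Nat.choose (n+2) (0+j+1)
      simp only [Nat.zero_add]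
      omega
    | succ i =>
      have h1 : ∑ u ∈ range (n+1), Nat.choose u j * Nat.choose (n+1-u) (i+1)
          = ∑ u ∈ range (n+1), (Nat.choose u j * Nat.choose (n-u) i
              + Nat.choose u j * Nat.choose (n-u) (i+1)) := by
        apply Finset.sum_congr rfl
        intro u hu
        have : n + 1 - u = (n - u) + 1 := by
          have := Finset.mem_range.1 hu; omega
        rw [this, Nat.choose_succ_succ, Nat.mul_add]
      rw [h1, Finset.sum_add_distrib, ih i, ih (i+1)]
      have : Nat.choose 0 (i+1) = 0 := by simp
      rw [Nat.sub_self, this, Nat.mul_zero, Nat.add_zero]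
      have h2 : Nat.choose (n+2) (i+j+1+1)
          = Nat.choose (n+1) (i+j+1) + Nat.choose (n+1) (i+j+1+1) :=
        Nat.choose_succ_succ (n+1) (i+j+1)
      show Nat.choose (n+1) (i+j+1) + Nat.choose (n+1) (i+1+j+1) = Nat.choose (n+2) (i+1+j+1)
      have e1 : i+1+j+1 = i+j+1+1 := by omega
      rw [e1, h2]



lemma card_powersetCard_inter {α : Type*} [DecidableEq α] (U K : Finset α) (hKU : K ⊆ U) (a j : ℕ)
    (hj : j ≤ a) :
    ((U.powersetCard a).filter (fun T => (T ∩ K).card = j)).card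
      = Nat.choose K.card j * Nat.choose (U \ K).card (a - j) := by
  rw [← Finset.card_powersetCard, ← Finset.card_powersetCard, ← Finset.card_product]
  apply Finset.card_bij' (fun T _ => (T ∩ K, T \ K)) (fun P _ => P.1 ∪ P.2)
  · intro T hT
    simp only [Finset.mem_filter, Finset.mem_powersetCard] at hT
    obtain ⟨⟨hTU, hTa⟩, hTj⟩ := hT
    simp only [Finset.mem_product, Finset.mem_powersetCard]
    refine ⟨⟨Finset.inter_subset_right, hTj⟩, ⟨?_, ?_⟩⟩
    · intro y hy
      simp only [Finset.mem_sdiff] at hy ⊢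
      exact ⟨hTU hy.1, hy.2⟩
    · have := Finset.card_inter_add_card_sdiff T K
      omega
  · intro P hP
    simp only [Finset.mem_product, Finset.mem_powersetCard] at hP
    obtain ⟨⟨h1U, h1c⟩, h2U, h2c⟩ := hP
    simp only [Finset.mem_filter, Finset.mem_powersetCard]
    have hdisj : Disjoint P.1 P.2 := by
      apply Finset.disjoint_left.2
      intro y hy1 hy2
      exact (Finset.mem_sdiff.1 (h2U hy2)).2 (h1U hy1)
    have hPK : P.2 ∩ K = ∅ := by
      apply Finset.eq_empty_of_forall_notMem
      intro y hy
      rcases Finset.mem_inter.1 hy with ⟨hy2, hyK⟩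
      exact (Finset.mem_sdiff.1 (h2U hy2)).2 hyK
    refine ⟨⟨?_, ?_⟩, ?_⟩
    · intro y hy
      rcases Finset.mem_union.1 hy with h | h
      · exact hKU (h1U h)
      · exact (Finset.mem_sdiff.1 (h2U h)).1
    · rw [Finset.card_union_of_disjoint hdisj]; omega
    · rw [Finset.union_inter_distrib_right, hPK, Finset.union_empty,
        Finset.inter_eq_left.2 h1U, h1c]
  · intro T hT
    ext y
    simp only [Finset.mem_union, Finset.mem_inter, Finset.mem_sdiff]
    tauto
  · intro P hP
    simp only [Finset.mem_product, Finset.mem_powersetCard] at hP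
    obtain ⟨⟨h1U, h1c⟩, h2U, h2c⟩ := hP
    have hPK : P.2 ∩ K = ∅ := by
      apply Finset.eq_empty_of_forall_notMem
      intro y hy
      rcases Finset.mem_inter.1 hy with ⟨hy2, hyK⟩
      exact (Finset.mem_sdiff.1 (h2U hy2)).2 hyK
    have h1 : (P.1 ∪ P.2) ∩ K = P.1 := by
      rw [Finset.union_inter_distrib_right, hPK, Finset.union_empty,
        Finset.inter_eq_left.2 h1U]
    have h2 : (P.1 ∪ P.2) \ K = P.2 := by
      rw [Finset.union_sdiff_distrib, Finset.sdiff_eq_empty_iff_subset.2 h1U,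
        Finset.empty_union, Finset.sdiff_eq_self_iff_disjoint.2 ?_]
      apply Finset.disjoint_left.2
      intro y hy hyK
      exact (Finset.mem_sdiff.1 (h2U hy)).2 hyK
    exact Prod.ext h1 h2



lemma my_subtypeCongr_pos {α : Type*} {p q : α → Prop} [DecidablePred p] [DecidablePred q]
    (e : {x // p x} ≃ {x // q x}) (f : {x // ¬p x} ≃ {x // ¬q x}) (x : α) (h : p x) :
    Equiv.subtypeCongr e f x = (e ⟨x, h⟩ : {x // q x}) := by
  simp [Equiv.subtypeCongr, Equiv.sumCompl_symm_apply_of_pos h]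

lemma my_subtypeCongr_neg {α : Type*} {p q : α → Prop} [DecidablePred p] [DecidablePred q]
    (e : {x // p x} ≃ {x // q x}) (f : {x // ¬p x} ≃ {x // ¬q x}) (x : α) (h : ¬ p x) :
    Equiv.subtypeCongr e f x = (f ⟨x, h⟩ : {x // ¬q x}) := by
  simp [Equiv.subtypeCongr, Equiv.sumCompl_symm_apply_of_neg h]

lemma card_perm_fiber {α : Type*} [Fintype α] [DecidableEq α] (p : α → Prop) [DecidablePred p]
    (T : Finset α) (hT : T.card = (Finset.univ.filter p).card) :
    (Finset.univ.filter (fun σ : Equiv.Perm α => ∀ t, p (σ t) ↔ t ∈ T)).card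
      = (T.card).factorial * (Fintype.card α - T.card).factorial := by
  classical
  have e : {σ : Equiv.Perm α // ∀ t, p (σ t) ↔ t ∈ T}
      ≃ ({t // t ∈ T} ≃ {b // p b}) × ({t // ¬ t ∈ T} ≃ {b // ¬ p b}) :=
    { toFun := fun σ =>
        (Equiv.subtypeEquiv σ.1 (fun t => (σ.2 t).symm),
         Equiv.subtypeEquiv σ.1 (fun t => not_congr (σ.2 t).symm))
      invFun := fun ef => ⟨Equiv.subtypeCongr ef.1 ef.2, by
        intro t
        by_cases ht : t ∈ T
        · rw [my_subtypeCongr_pos ef.1 ef.2 t ht]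
          exact iff_of_true (ef.1 ⟨t, ht⟩).2 ht
        · rw [my_subtypeCongr_neg ef.1 ef.2 t ht]
          exact iff_of_false (ef.2 ⟨t, ht⟩).2 ht⟩
      left_inv := by
        rintro ⟨σ, hσ⟩
        ext t
        by_cases ht : t ∈ T
        · simp [my_subtypeCongr_pos _ _ t ht]
        · simp [my_subtypeCongr_neg _ _ t ht]
      right_inv := by
        rintro ⟨e₁, e₂⟩
        ext t
        · simp [my_subtypeCongr_pos e₁ e₂ t.1 t.2]
        · simp [my_subtypeCongr_neg e₁ e₂ t.1 t.2] }
  have h1 : (Finset.univ.filter (fun σ : Equiv.Perm α => ∀ t, p (σ t) ↔ t ∈ T)).card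
      = Fintype.card {σ : Equiv.Perm α // ∀ t, p (σ t) ↔ t ∈ T} := by
    rw [Fintype.card_subtype]
  rw [h1, Fintype.card_congr e, Fintype.card_prod]
  have hc1 : Fintype.card {t // t ∈ T} = T.card := Fintype.card_coe T
  have hc2 : Fintype.card {b // p b} = T.card := by
    rw [Fintype.card_subtype, hT]
  have hc3 : Fintype.card {t // ¬ t ∈ T} = Fintype.card α - T.card := by
    rw [Fintype.card_subtype_compl, hc1]
  have hc4 : Fintype.card {b // ¬ p b} = Fintype.card α - T.card := by
    rw [Fintype.card_subtype_compl, hc2]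
  rw [Fintype.card_equiv (Fintype.equivOfCardEq (hc1.trans hc2.symm)),
    Fintype.card_equiv (Fintype.equivOfCardEq (hc3.trans hc4.symm)), hc1, hc3]



lemma filter_card_le_eq_sum {β : Type*} [DecidableEq β] (s : Finset β) (g : β → ℕ) (R : ℕ) :
    (s.filter (fun b => g b ≤ R)).card
      = ∑ j ∈ range (R+1), (s.filter (fun b => g b = j)).card := by
  classical
  rw [← Finset.card_biUnion]
  · congr 1
    ext b
    simp only [Finset.mem_biUnion, Finset.mem_filter, Finset.mem_range]
    constructor
    · rintro ⟨hb, hg⟩; exact ⟨g b, by omega, hb, rfl⟩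
    · rintro ⟨j, hj, hb, rfl⟩; exact ⟨hb, by omega⟩
  · intro j hj j' hj' hne
    apply Finset.disjoint_left.2
    intro b hb hb'
    simp only [Finset.mem_filter] at hb hb'
    exact hne (hb.2 ▸ hb'.2 ▸ rfl)

lemma perm_filter_card {α : Type*} [Fintype α] [DecidableEq α] (σ : Equiv.Perm α)
    (q : α → Prop) [DecidablePred q] :
    (Finset.univ.filter (fun t => q (σ t))).card = (Finset.univ.filter q).card := by
  apply Finset.card_bij (fun t _ => σ t)
  · intro t ht
    simp only [Finset.mem_filter, Finset.mem_univ, true_and] at ht ⊢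
    exact ht
  · intro t _ t' _ h
    exact σ.injective h
  · intro b hb
    refine ⟨σ.symm b, ?_, by simp⟩
    simp only [Finset.mem_filter, Finset.mem_univ, true_and] at hb ⊢
    simpa using hb

lemma card_fin_lt (n k : ℕ) :
    (Finset.univ.filter (fun t : Fin n => (t : ℕ) < k)).card = min k n := by
  rcases le_or_gt n k with h | h
  · rw [Finset.filter_true_of_mem (fun t _ => lt_of_lt_of_le t.2 h)]
    rw [Finset.card_univ, Fintype.card_fin]
    omega
  · have he : Finset.univ.filter (fun t : Fin n => (t : ℕ) < k)
        = Finset.Iio (⟨k, h⟩ : Fin n) := by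
      ext t
      simp [Finset.mem_Iio, Fin.lt_def]
    rw [he, Fin.card_Iio]
    simp only [min_eq_left (le_of_lt h)]



lemma equiv_filter_card {α β : Type*} [Fintype α] [Fintype β] [DecidableEq β] (e : α ≃ β)
    (q : β → Prop) [DecidablePred q] :
    (Finset.univ.filter (fun x => q (e x))).card = (Finset.univ.filter q).card := by
  apply Finset.card_bij (fun x _ => e x)
  · intro x hx
    simp only [Finset.mem_filter, Finset.mem_univ, true_and] at hx ⊢
    exact hx
  · intro x _ x' _ h
    exact e.injective h
  · intro b hb
    refine ⟨e.symm b, ?_, by simp⟩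
    simp only [Finset.mem_filter, Finset.mem_univ, true_and] at hb ⊢
    simpa using hb

lemma image_cons {k n : ℕ} (v : Fin n) (g : Fin k → Fin n) :
    Finset.image (Fin.cons v g : Fin (k+1) → Fin n) Finset.univ
      = insert v (Finset.image g Finset.univ) := by
  ext b
  simp only [Finset.mem_image, Finset.mem_insert, Finset.mem_univ, true_and]
  constructor
  · rintro ⟨t, rfl⟩
    rcases Fin.eq_zero_or_eq_succ t with h | ⟨t', rfl⟩
    · subst h; left; simp
    · right; exact ⟨t', by simp⟩
  · rintro (rfl | ⟨t', rfl⟩)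
    · exact ⟨0, by simp⟩
    · exact ⟨t'.succ, by simp⟩

lemma card_fun_into {k n : ℕ} (U : Finset (Fin n)) :
    (Finset.univ.filter (fun f : Fin k → Fin n => ∀ t, f t ∈ U)).card = U.card ^ k := by
  have he : Finset.univ.filter (fun f : Fin k → Fin n => ∀ t, f t ∈ U)
      = Fintype.piFinset (fun _ : Fin k => U) := by
    ext f
    simp [Fintype.mem_piFinset]
  rw [he, Fintype.card_piFinset]
  simp



section rec
variable {n m : ℕ} (c : Fin n → Fin m) (i₀ : Fin m)

lemma N_le_a {k : ℕ} (a : ℕ)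
    (hS : (Finset.univ.filter (fun b : Fin n => c b = i₀)).card = a) (g : Fin k → Fin n) :
    ((Finset.image g Finset.univ).filter (fun b => c b = i₀)).card ≤ a := by
  rw [← hS]
  exact Finset.card_le_card (Finset.filter_subset_filter _ (Finset.subset_univ _))

lemma Ncons {k : ℕ} (v : Fin n) (g : Fin k → Fin n) :
    ((Finset.image (Fin.cons v g : Fin (k+1) → Fin n) Finset.univ).filter
        (fun b => c b = i₀)).card
      = if c v = i₀ ∧ v ∉ Finset.image g Finset.univ
        then ((Finset.image g Finset.univ).filter (fun b => c b = i₀)).card + 1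
        else ((Finset.image g Finset.univ).filter (fun b => c b = i₀)).card := by
  classical
  rw [image_cons, Finset.filter_insert]
  by_cases hc : c v = i₀
  · rw [if_pos hc]
    by_cases hv : v ∈ Finset.image g Finset.univ
    · rw [Finset.card_insert_of_mem (Finset.mem_filter.2 ⟨hv, hc⟩), if_neg (by tauto)]
    · rw [Finset.card_insert_of_notMem (fun hmem => hv (Finset.mem_of_mem_filter _ hmem)),
        if_pos ⟨hc, hv⟩]
  · rw [if_neg hc, if_neg (by tauto)]

lemma card_new_special {k : ℕ} (a : ℕ)
    (hS : (Finset.univ.filter (fun b : Fin n => c b = i₀)).card = a) (g : Fin k → Fin n) :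
    (Finset.univ.filter (fun v : Fin n => c v = i₀ ∧ v ∉ Finset.image g Finset.univ)).card
      = a - ((Finset.image g Finset.univ).filter (fun b => c b = i₀)).card := by
  classical
  set S := Finset.univ.filter (fun b : Fin n => c b = i₀) with hSdef
  set im := Finset.image g Finset.univ with him
  have h1 : Finset.univ.filter (fun v : Fin n => c v = i₀ ∧ v ∉ im) = S \ im := by
    ext v
    simp only [Finset.mem_filter, Finset.mem_sdiff, Finset.mem_univ, true_and, hSdef]
  have h2 : S ∩ im = im.filter (fun b => c b = i₀) := by
    ext v
    simp only [Finset.mem_inter, Finset.mem_filter, Finset.mem_univ, true_and, hSdef]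
    tauto
  have h3 := Finset.card_inter_add_card_sdiff S im
  rw [h2] at h3
  rw [h1]
  omega

lemma cons_count {k : ℕ} (a : ℕ)
    (hS : (Finset.univ.filter (fun b : Fin n => c b = i₀)).card = a) (g : Fin k → Fin n)
    (j : ℕ) :
    (Finset.univ.filter (fun v : Fin n =>
        ((Finset.image (Fin.cons v g : Fin (k+1) → Fin n) Finset.univ).filter
          (fun b => c b = i₀)).card = j)).card
      = (if ((Finset.image g Finset.univ).filter (fun b => c b = i₀)).card = j
          then n - (a - ((Finset.image g Finset.univ).filter (fun b => c b = i₀)).card) else 0)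
        + (if ((Finset.image g Finset.univ).filter (fun b => c b = i₀)).card + 1 = j
          then a - ((Finset.image g Finset.univ).filter (fun b => c b = i₀)).card else 0) := by
  classical
  set Ng := ((Finset.image g Finset.univ).filter (fun b => c b = i₀)).card with hNg
  set A : Fin n → Prop := fun v => c v = i₀ ∧ v ∉ Finset.image g Finset.univ with hA
  have hpred : ∀ v : Fin n,
      ((Finset.image (Fin.cons v g : Fin (k+1) → Fin n) Finset.univ).filter
        (fun b => c b = i₀)).card = (if A v then Ng + 1 else Ng) := fun v => Ncons c i₀ v g
  have hAcard : (Finset.univ.filter A).card = a - Ng := card_new_special c i₀ a hS g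
  have hcompl : (Finset.univ.filter (fun v => ¬ A v)).card = n - (a - Ng) := by
    have := Finset.card_filter_add_card_filter_not (s := (Finset.univ : Finset (Fin n)))
      (p := A)
    rw [Finset.card_univ, Fintype.card_fin] at this
    omega
  by_cases h1 : Ng = j
  · have hne : ¬ (Ng + 1 = j) := by omega
    rw [if_pos h1, if_neg hne, add_zero]
    have heq : Finset.univ.filter (fun v : Fin n =>
        ((Finset.image (Fin.cons v g : Fin (k+1) → Fin n) Finset.univ).filter
          (fun b => c b = i₀)).card = j)
        = Finset.univ.filter (fun v => ¬ A v) := by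
      apply Finset.filter_congr
      intro v _
      rw [hpred v]
      by_cases hAv : A v
      · simp only [if_pos hAv]
        exact iff_of_false (by omega) (fun h => h hAv)
      · simp only [if_neg hAv]
        exact iff_of_true h1 hAv
    rw [heq, hcompl]
  · by_cases h2 : Ng + 1 = j
    · rw [if_neg h1, if_pos h2, zero_add]
      have heq : Finset.univ.filter (fun v : Fin n =>
          ((Finset.image (Fin.cons v g : Fin (k+1) → Fin n) Finset.univ).filter
            (fun b => c b = i₀)).card = j)
          = Finset.univ.filter A := by
        apply Finset.filter_congr
        intro v _
        rw [hpred v]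
        by_cases hAv : A v
        · simp only [if_pos hAv]
          exact iff_of_true h2 hAv
        · simp only [if_neg hAv]
          exact iff_of_false h1 hAv
      rw [heq, hAcard]
    · rw [if_neg h1, if_neg h2, add_zero]
      rw [Finset.card_eq_zero]
      apply Finset.filter_false_of_mem
      intro v _
      rw [hpred v]
      by_cases hAv : A v
      · rw [if_pos hAv]; omega
      · rw [if_neg hAv]; omega

lemma F_split (a : ℕ)
    (hS : (Finset.univ.filter (fun b : Fin n => c b = i₀)).card = a) (k j : ℕ) :
    (Finset.univ.filter (fun f : Fin (k+1) → Fin n =>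
        ((Finset.image f Finset.univ).filter (fun b => c b = i₀)).card = j)).card
      = ∑ g : Fin k → Fin n,
          ((if ((Finset.image g Finset.univ).filter (fun b => c b = i₀)).card = j
            then n - (a - ((Finset.image g Finset.univ).filter (fun b => c b = i₀)).card) else 0)
          + (if ((Finset.image g Finset.univ).filter (fun b => c b = i₀)).card + 1 = j
            then a - ((Finset.image g Finset.univ).filter (fun b => c b = i₀)).card else 0)) := by
  classical
  have he := equiv_filter_card (Fin.consEquiv (fun _ : Fin (k+1) => Fin n))
    (fun f : Fin (k+1) → Fin n =>
      ((Finset.image f Finset.univ).filter (fun b => c b = i₀)).card = j)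
  rw [← he]
  have hc : ∀ p : Fin n × (Fin k → Fin n),
      (Fin.consEquiv (fun _ : Fin (k+1) => Fin n)) p = Fin.cons p.1 p.2 := fun p => rfl
  rw [Finset.card_filter]
  rw [← Finset.univ_product_univ, Finset.sum_product]
  rw [Finset.sum_comm]
  apply Finset.sum_congr rfl
  intro g _
  rw [← Finset.card_filter]
  have := cons_count c i₀ a hS g j
  convert this using 2
  rfl



end rec

section rec
variable {n m : ℕ} (c : Fin n → Fin m) (i₀ : Fin m)

lemma F_zero_succ (a : ℕ)
    (hS : (Finset.univ.filter (fun b : Fin n => c b = i₀)).card = a) (k : ℕ) :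
    (Finset.univ.filter (fun f : Fin (k+1) → Fin n =>
        ((Finset.image f Finset.univ).filter (fun b => c b = i₀)).card = 0)).card
      = (n - a) * (Finset.univ.filter (fun g : Fin k → Fin n =>
          ((Finset.image g Finset.univ).filter (fun b => c b = i₀)).card = 0)).card := by
  classical
  rw [F_split c i₀ a hS k 0]
  have hterm : ∀ g : Fin k → Fin n,
      ((if ((Finset.image g Finset.univ).filter (fun b => c b = i₀)).card = 0
        then n - (a - ((Finset.image g Finset.univ).filter (fun b => c b = i₀)).card) else 0)
      + (if ((Finset.image g Finset.univ).filter (fun b => c b = i₀)).card + 1 = 0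
        then a - ((Finset.image g Finset.univ).filter (fun b => c b = i₀)).card else 0))
      = if ((Finset.image g Finset.univ).filter (fun b => c b = i₀)).card = 0
        then n - a else 0 := by
    intro g
    by_cases h : ((Finset.image g Finset.univ).filter (fun b => c b = i₀)).card = 0
    · rw [if_pos h, if_neg (by omega), add_zero, if_pos h, h, Nat.sub_zero]
    · rw [if_neg h, if_neg (by omega), add_zero, if_neg h]
  rw [Finset.sum_congr rfl (fun g _ => hterm g), Finset.sum_ite, Finset.sum_const,
    Finset.sum_const_zero, add_zero, smul_eq_mul, mul_comm]

lemma F_succ_succ (a : ℕ)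
    (hS : (Finset.univ.filter (fun b : Fin n => c b = i₀)).card = a) (han : a ≤ n) (k j : ℕ) :
    (Finset.univ.filter (fun f : Fin (k+1) → Fin n =>
        ((Finset.image f Finset.univ).filter (fun b => c b = i₀)).card = j+1)).card
      = (n - a + (j+1)) * (Finset.univ.filter (fun g : Fin k → Fin n =>
          ((Finset.image g Finset.univ).filter (fun b => c b = i₀)).card = j+1)).card
        + (a - j) * (Finset.univ.filter (fun g : Fin k → Fin n =>
          ((Finset.image g Finset.univ).filter (fun b => c b = i₀)).card = j)).card := by
  classical
  rw [F_split c i₀ a hS k (j+1)]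
  have hterm : ∀ g : Fin k → Fin n,
      ((if ((Finset.image g Finset.univ).filter (fun b => c b = i₀)).card = j+1
        then n - (a - ((Finset.image g Finset.univ).filter (fun b => c b = i₀)).card) else 0)
      + (if ((Finset.image g Finset.univ).filter (fun b => c b = i₀)).card + 1 = j+1
        then a - ((Finset.image g Finset.univ).filter (fun b => c b = i₀)).card else 0))
      = (if ((Finset.image g Finset.univ).filter (fun b => c b = i₀)).card = j+1
          then n - a + (j+1) else 0)
        + (if ((Finset.image g Finset.univ).filter (fun b => c b = i₀)).card = j
          then a - j else 0) := by
    intro g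
    have hle := N_le_a c i₀ a hS g
    congr 1
    · by_cases h : ((Finset.image g Finset.univ).filter (fun b => c b = i₀)).card = j+1
      · rw [if_pos h, if_pos h, h]
        omega
      · rw [if_neg h, if_neg h]
    · by_cases h : ((Finset.image g Finset.univ).filter (fun b => c b = i₀)).card = j
      · rw [if_pos (by omega), if_pos h, h]
      · rw [if_neg (by omega), if_neg h]
  rw [Finset.sum_congr rfl (fun g _ => hterm g), Finset.sum_add_distrib, Finset.sum_ite,
    Finset.sum_const, Finset.sum_const_zero, add_zero, smul_eq_mul, Finset.sum_ite,
    Finset.sum_const, Finset.sum_const_zero, add_zero, smul_eq_mul, mul_comm, mul_comm _ (a-j)]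

lemma F_init (j : ℕ) :
    (Finset.univ.filter (fun f : Fin 0 → Fin n =>
        ((Finset.image f Finset.univ).filter (fun b => c b = i₀)).card = j)).card
      = if j = 0 then 1 else 0 := by
  classical
  have himg : ∀ f : Fin 0 → Fin n, Finset.image f Finset.univ = ∅ := by
    intro f
    simp
  by_cases hj : j = 0
  · subst hj
    rw [if_pos rfl]
    have : Finset.univ.filter (fun f : Fin 0 → Fin n =>
        ((Finset.image f Finset.univ).filter (fun b => c b = i₀)).card = 0) = Finset.univ := by
      apply Finset.filter_true_of_mem
      intro f _
      rw [himg f]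
      simp
    rw [this, Finset.card_univ, Fintype.card_fun]
    simp
  · rw [if_neg hj, Finset.card_eq_zero]
    apply Finset.filter_false_of_mem
    intro f _
    rw [himg f]
    simpa using fun h => hj h.symm

lemma F_bound (a : ℕ)
    (hS : (Finset.univ.filter (fun b : Fin n => c b = i₀)).card = a) (k j : ℕ) :
    (Finset.univ.filter (fun f : Fin k → Fin n =>
        ((Finset.image f Finset.univ).filter (fun b => c b = i₀)).card = j)).card
      ≤ Nat.choose a j * (n - a + j) ^ k := by
  classical
  set S := Finset.univ.filter (fun b : Fin n => c b = i₀) with hSdef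
  have hsub : (Finset.univ.filter (fun f : Fin k → Fin n =>
      ((Finset.image f Finset.univ).filter (fun b => c b = i₀)).card = j))
      ⊆ (S.powersetCard j).biUnion
          (fun J => Finset.univ.filter (fun f : Fin k → Fin n =>
            ∀ t, f t ∈ (Finset.univ \ S) ∪ J)) := by
    intro f hf
    simp only [Finset.mem_filter, Finset.mem_univ, true_and] at hf
    rw [Finset.mem_biUnion]
    refine ⟨(Finset.image f Finset.univ).filter (fun b => c b = i₀), ?_, ?_⟩
    · rw [Finset.mem_powersetCard]
      exact ⟨Finset.filter_subset_filter _ (Finset.subset_univ _), hf⟩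
    · simp only [Finset.mem_filter, Finset.mem_univ, true_and]
      intro t
      rw [Finset.mem_union]
      by_cases hc : c (f t) = i₀
      · right
        exact Finset.mem_filter.2 ⟨Finset.mem_image.2 ⟨t, Finset.mem_univ t, rfl⟩, hc⟩
      · left
        rw [Finset.mem_sdiff]
        exact ⟨Finset.mem_univ _, fun hmem => hc (Finset.mem_filter.1 hmem).2⟩
  calc (Finset.univ.filter (fun f : Fin k → Fin n =>
        ((Finset.image f Finset.univ).filter (fun b => c b = i₀)).card = j)).card
      ≤ ((S.powersetCard j).biUnion
          (fun J => Finset.univ.filter (fun f : Fin k → Fin n =>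
            ∀ t, f t ∈ (Finset.univ \ S) ∪ J))).card := Finset.card_le_card hsub
    _ ≤ ∑ J ∈ S.powersetCard j, (Finset.univ.filter (fun f : Fin k → Fin n =>
            ∀ t, f t ∈ (Finset.univ \ S) ∪ J)).card := Finset.card_biUnion_le
    _ ≤ ∑ J ∈ S.powersetCard j, (n - a + j) ^ k := by
        apply Finset.sum_le_sum
        intro J hJ
        rw [Finset.mem_powersetCard] at hJ
        rw [card_fun_into]
        apply Nat.pow_le_pow_left
        calc ((Finset.univ \ S) ∪ J).card ≤ (Finset.univ \ S).card + J.card :=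
              Finset.card_union_le _ _
          _ ≤ n - a + j := by
              rw [Finset.card_sdiff_of_subset (Finset.subset_univ _), Finset.card_univ, Fintype.card_fin,
                hS, hJ.2]
    _ = Nat.choose a j * (n - a + j) ^ k := by
        rw [Finset.sum_const, Finset.card_powersetCard, hS, smul_eq_mul]

end rec



lemma part1_count (n : ℕ) {m : ℕ} (c : Fin n → Fin m) (i₀ : Fin m) (a r k : ℕ)
    (hS : (Finset.univ.filter (fun b : Fin n => c b = i₀)).card = a)
    (hra : r ≤ a) (hr : 1 ≤ r) :
    (Finset.univ.filter (fun σ : Equiv.Perm (Fin n) =>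
        (Finset.univ.filter (fun t : Fin n => (t : ℕ) < k ∧ c (σ t) = i₀)).card ≤ r - 1)).card
      = a.factorial * (n - a).factorial *
        ∑ j ∈ range r, Nat.choose (min k n) j * Nat.choose (n - min k n) (a - j) := by
  classical
  set Ik : Finset (Fin n) := Finset.univ.filter (fun t : Fin n => (t : ℕ) < k) with hIk
  have hinner : ∀ σ : Equiv.Perm (Fin n),
      Finset.univ.filter (fun t : Fin n => (t : ℕ) < k ∧ c (σ t) = i₀)
        = (Finset.univ.filter (fun t => c (σ t) = i₀)) ∩ Ik := by
    intro σ
    ext t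
    simp only [Finset.mem_filter, Finset.mem_inter, Finset.mem_univ, true_and, hIk]
    tauto
  set φ : Equiv.Perm (Fin n) → Finset (Fin n) :=
    fun σ => Finset.univ.filter (fun t => c (σ t) = i₀) with hφ
  set t : Finset (Finset (Fin n)) :=
    (Finset.univ.powersetCard a).filter (fun T => (T ∩ Ik).card ≤ r - 1) with ht
  have hφcard : ∀ σ : Equiv.Perm (Fin n), (φ σ).card = a := by
    intro σ
    rw [hφ]
    simpa using (perm_filter_card σ (fun b => c b = i₀)).trans hS
  have hmem : ∀ σ ∈ (Finset.univ.filter (fun σ : Equiv.Perm (Fin n) =>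
      (Finset.univ.filter (fun t : Fin n => (t : ℕ) < k ∧ c (σ t) = i₀)).card ≤ r - 1)),
      φ σ ∈ t := by
    intro σ hσ
    simp only [Finset.mem_filter, Finset.mem_univ, true_and] at hσ
    rw [hinner σ] at hσ
    simp only [ht, Finset.mem_filter, Finset.mem_powersetCard]
    exact ⟨⟨Finset.subset_univ _, hφcard σ⟩, hσ⟩
  rw [Finset.card_eq_sum_card_fiberwise hmem]
  have hfiber : ∀ T ∈ t,
      ((Finset.univ.filter (fun σ : Equiv.Perm (Fin n) =>
        (Finset.univ.filter (fun u : Fin n => (u : ℕ) < k ∧ c (σ u) = i₀)).card ≤ r - 1)).filter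
          (fun σ => φ σ = T)).card = a.factorial * (n - a).factorial := by
    intro T hT
    simp only [ht, Finset.mem_filter, Finset.mem_powersetCard] at hT
    obtain ⟨⟨-, hTa⟩, hTr⟩ := hT
    have h1 : ((Finset.univ.filter (fun σ : Equiv.Perm (Fin n) =>
        (Finset.univ.filter (fun u : Fin n => (u : ℕ) < k ∧ c (σ u) = i₀)).card ≤ r - 1)).filter
          (fun σ => φ σ = T))
        = Finset.univ.filter (fun σ : Equiv.Perm (Fin n) => φ σ = T) := by
      ext σ
      simp only [Finset.mem_filter, Finset.mem_univ, true_and, and_iff_right_iff_imp]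
      intro hφT
      rw [hinner σ]
      have hgoal : (φ σ ∩ Ik).card ≤ r - 1 := by rw [hφT]; exact hTr
      exact hgoal
    rw [h1]
    have h2 : Finset.univ.filter (fun σ : Equiv.Perm (Fin n) => φ σ = T)
        = Finset.univ.filter (fun σ : Equiv.Perm (Fin n) => ∀ u, c (σ u) = i₀ ↔ u ∈ T) := by
      apply Finset.filter_congr
      intro σ _
      simp only [hφ, Finset.ext_iff, Finset.mem_filter, Finset.mem_univ, true_and, eq_iff_iff]
    have h3 := card_perm_fiber (fun b => c b = i₀) T (hTa.trans hS.symm)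
    rw [Fintype.card_fin, hTa] at h3
    rw [h2]
    convert h3 using 2
    ext σ
    simp
  rw [Finset.sum_congr rfl hfiber, Finset.sum_const, smul_eq_mul, mul_comm]
  congr 1
  rw [ht, filter_card_le_eq_sum _ (fun T => (T ∩ Ik).card) (r-1)]
  have hrr : r - 1 + 1 = r := by omega
  rw [hrr]
  apply Finset.sum_congr rfl
  intro j hj
  have hja : j ≤ a := by
    have := Finset.mem_range.1 hj; omega
  rw [card_powersetCard_inter Finset.univ Ik (Finset.subset_univ _) a j hja]
  congr 1
  · rw [hIk, card_fin_lt]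
  · congr 1
    rw [Finset.card_sdiff_of_subset (Finset.subset_univ _), Finset.card_univ, Fintype.card_fin, hIk,
      card_fin_lt]



theorem part1
    (n m r a : ℕ) (x : Fin m → ℕ) (c : Fin n → Fin m) (i₀ : Fin m)
    (hx : ∀ i, (Finset.univ.filter (fun b : Fin n => c b = i)).card = x i)
    (hn : ∑ i, x i = n) (hr : 2 ≤ r)
    (ha : x i₀ = a) (har : r ≤ a) (hsmall : ∀ i, i ≠ i₀ → x i < r) :
    (∑' k : ℕ,
        ((Nat.card {σ : Equiv.Perm (Fin n) // ∀ i : Fin m,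
            (Finset.univ.filter (fun t : Fin n => t.val < k ∧ c (σ t) = i)).card ≤ r - 1} : ℝ)
          / (Nat.factorial n : ℝ)))
      = (r : ℝ) * (n + 1) / (a + 1) := by
  classical
  have hS : (Finset.univ.filter (fun b : Fin n => c b = i₀)).card = a := (hx i₀).trans ha
  have han : a ≤ n := by
    rw [← hn, ← ha]
    exact Finset.single_le_sum (fun i _ => Nat.zero_le (x i)) (Finset.mem_univ i₀)
  -- Step A : identify Nat.card with single-colour filter card
  have hcard : ∀ k : ℕ, (Nat.card {σ : Equiv.Perm (Fin n) // ∀ i : Fin m,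
      (Finset.univ.filter (fun t : Fin n => t.val < k ∧ c (σ t) = i)).card ≤ r - 1})
      = (Finset.univ.filter (fun σ : Equiv.Perm (Fin n) =>
          (Finset.univ.filter (fun t : Fin n => (t : ℕ) < k ∧ c (σ t) = i₀)).card ≤ r - 1)).card := by
    intro k
    rw [Nat.card_eq_fintype_card, Fintype.card_subtype]
    congr 1
    ext σ
    simp only [Finset.mem_filter, Finset.mem_univ, true_and]
    constructor
    · intro h; exact h i₀
    · intro h i
      by_cases hi : i = i₀
      · rw [hi]; exact h
      · have hsub : (Finset.univ.filter (fun t : Fin n => (t : ℕ) < k ∧ c (σ t) = i))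
            ⊆ (Finset.univ.filter (fun t : Fin n => c (σ t) = i)) := by
          intro t ht
          simp only [Finset.mem_filter] at ht ⊢
          exact ⟨ht.1, ht.2.2⟩
        have h1 := Finset.card_le_card hsub
        have h2 : (Finset.univ.filter (fun t : Fin n => c (σ t) = i)).card = x i :=
          (perm_filter_card σ (fun b => c b = i)).trans (hx i)
        have h3 := hsmall i hi
        omega
  -- Step B : vanishing for large k
  have hvanish : ∀ k : ℕ, n ≤ k →
      (Finset.univ.filter (fun σ : Equiv.Perm (Fin n) =>
        (Finset.univ.filter (fun t : Fin n => (t : ℕ) < k ∧ c (σ t) = i₀)).card ≤ r - 1)).card = 0 := by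
    intro k hk
    rw [Finset.card_eq_zero]
    apply Finset.eq_empty_of_forall_notMem
    intro σ hσ
    simp only [Finset.mem_filter, Finset.mem_univ, true_and] at hσ
    have he : (Finset.univ.filter (fun t : Fin n => (t : ℕ) < k ∧ c (σ t) = i₀))
        = (Finset.univ.filter (fun t : Fin n => c (σ t) = i₀)) := by
      apply Finset.filter_congr
      intro t _
      have : (t : ℕ) < k := lt_of_lt_of_le t.2 hk
      simp [this]
    rw [he, (perm_filter_card σ (fun b => c b = i₀)).trans hS] at hσ
    omega
  -- the summand function
  set f : ℕ → ℝ := fun k =>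
    ((Nat.card {σ : Equiv.Perm (Fin n) // ∀ i : Fin m,
        (Finset.univ.filter (fun t : Fin n => t.val < k ∧ c (σ t) = i)).card ≤ r - 1} : ℝ)
      / (Nat.factorial n : ℝ)) with hf
  have hsupp : ∀ k ∉ range (n+1), f k = 0 := by
    intro k hk
    rw [hf]
    simp only
    rw [hcard k, hvanish k (by simp only [Finset.mem_range] at hk; omega)]
    simp
  rw [tsum_eq_sum hsupp]
  have hterm : ∀ k ∈ range (n+1), f k =
      ((a.factorial * (n - a).factorial *
        ∑ j ∈ range r, Nat.choose k j * Nat.choose (n-k) (a-j) : ℕ) : ℝ) / (n.factorial : ℝ) := by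
    intro k hk
    have hkn : min k n = k := by
      simp only [Finset.mem_range] at hk; omega
    rw [hf]
    simp only
    rw [hcard k, part1_count n c i₀ a r k hS har (by omega), hkn]
  rw [Finset.sum_congr rfl hterm, ← Finset.sum_div]
  rw [← Nat.cast_sum, ← Finset.mul_sum, Finset.sum_comm]
  have hinner : ∀ j ∈ range r, ∑ k ∈ range (n+1), Nat.choose k j * Nat.choose (n-k) (a-j)
      = Nat.choose (n+1) (a+1) := by
    intro j hj
    rw [sum_choose_mul_choose n j (a-j)]
    congr 1
    have : j ≤ a := by
      simp only [Finset.mem_range] at hj; omega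
    omega
  rw [Finset.sum_congr rfl hinner, Finset.sum_const, Finset.card_range, smul_eq_mul]
  -- final arithmetic
  have key := Nat.choose_mul_factorial_mul_factorial (Nat.succ_le_succ han)
  rw [show n + 1 - (a+1) = n - a by omega, Nat.factorial_succ a, Nat.factorial_succ n] at key
  have keyR : (Nat.choose (n+1) (a+1) : ℝ) * (((a:ℝ)+1) * (a.factorial : ℝ))
      * ((n-a).factorial : ℝ) = ((n:ℝ)+1) * (n.factorial : ℝ) := by
    exact_mod_cast key
  have hfact : (n.factorial : ℝ) ≠ 0 := by positivity
  have ha1 : ((a:ℝ)+1) ≠ 0 := by positivity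
  push_cast
  field_simp
  ring_nf
  ring_nf at keyR
  nlinarith [keyR]



theorem part2
    (n m r a : ℕ) (x : Fin m → ℕ) (c : Fin n → Fin m) (i₀ : Fin m)
    (hx : ∀ i, (Finset.univ.filter (fun b : Fin n => c b = i)).card = x i)
    (hn : ∑ i, x i = n) (hr : 2 ≤ r)
    (ha : x i₀ = a) (har : r ≤ a) (hsmall : ∀ i, i ≠ i₀ → x i < r) :
    (∑' k : ℕ,
        ((Nat.card {f : Fin k → Fin n // ∀ i : Fin m,
            ((Finset.image f Finset.univ).filter (fun b : Fin n => c b = i)).card ≤ r - 1} : ℝ)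
          / (n ^ k : ℝ)))
      = (n : ℝ) * ∑ i ∈ Finset.range r, (1 : ℝ) / ((a : ℝ) - i) := by
  classical
  have hS : (Finset.univ.filter (fun b : Fin n => c b = i₀)).card = a := (hx i₀).trans ha
  have han : a ≤ n := by
    rw [← hn, ← ha]
    exact Finset.single_le_sum (fun i _ => Nat.zero_le (x i)) (Finset.mem_univ i₀)
  have hn0 : 0 < n := by omega
  have hnR : (0:ℝ) < n := by exact_mod_cast hn0
  -- the exact-count function
  set F : ℕ → ℕ → ℕ := fun j k =>
    (Finset.univ.filter (fun f : Fin k → Fin n =>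
      ((Finset.image f Finset.univ).filter (fun b => c b = i₀)).card = j)).card with hF
  -- summability
  have hsummable : ∀ j < a, Summable (fun k => (F j k : ℝ) / (n:ℝ)^k) := by
    intro j hj
    have hlt : ((n - a + j : ℕ) : ℝ) / n < 1 := by
      rw [div_lt_one hnR]
      exact_mod_cast (by omega : n - a + j < n)
    have hge : (0:ℝ) ≤ ((n - a + j : ℕ) : ℝ) / n := by positivity
    have hgeom : Summable (fun k : ℕ => (Nat.choose a j : ℝ)
        * (((n - a + j : ℕ) : ℝ) / n)^k) :=
      (summable_geometric_of_lt_one hge hlt).mul_left _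
    apply Summable.of_nonneg_of_le (fun k => by positivity) _ hgeom
    intro k
    rw [div_pow, ← mul_div_assoc]
    gcongr
    exact_mod_cast F_bound c i₀ a hS k j
  have hnne : (n:ℝ) ≠ 0 := ne_of_gt hnR
  -- closed form for F 0
  have hF0 : ∀ k, F 0 k = (n - a)^k := by
    intro k
    induction k with
    | zero =>
      have := F_init c i₀ (n := n) 0
      rw [hF]
      simpa using this
    | succ k ih =>
      show (Finset.univ.filter (fun f : Fin (k+1) → Fin n =>
        ((Finset.image f Finset.univ).filter (fun b => c b = i₀)).card = 0)).card = (n-a)^(k+1)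
      rw [F_zero_succ c i₀ a hS k]
      have : (Finset.univ.filter (fun g : Fin k → Fin n =>
        ((Finset.image g Finset.univ).filter (fun b => c b = i₀)).card = 0)).card = (n-a)^k := ih
      rw [this, pow_succ]
      ring
  -- the tsum values
  have hu : ∀ j, j < a → ∑' k, (F j k : ℝ) / (n:ℝ)^k = (n:ℝ) / ((a:ℝ) - j) := by
    intro j
    induction j with
    | zero =>
      intro hj
      have hterm : ∀ k, (F 0 k : ℝ)/(n:ℝ)^k = (((n-a:ℕ):ℝ)/n)^k := by
        intro k
        rw [hF0 k, div_pow]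
        push_cast
        ring
      have hlt : ((n - a : ℕ) : ℝ) / n < 1 := by
        rw [div_lt_one hnR]
        exact_mod_cast (by omega : n - a < n)
      have hge : (0:ℝ) ≤ ((n - a : ℕ) : ℝ) / n := by positivity
      rw [tsum_congr hterm, tsum_geometric_of_lt_one hge hlt]
      have hcast : ((n-a:ℕ):ℝ) = (n:ℝ) - a := by
        push_cast [Nat.cast_sub han]
        ring
      have haR : (0:ℝ) < a := by exact_mod_cast (by omega : 0 < a)
      rw [hcast, Nat.cast_zero, sub_zero]
      rw [show (1:ℝ) - ((n:ℝ) - a)/n = (a:ℝ)/n by field_simp; ring]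
      rw [inv_div]
    | succ j ih =>
      intro hj1
      have hj : j < a := by omega
      have huj := ih hj
      have hs1 := hsummable (j+1) hj1
      have hs0 := hsummable j hj
      have hshift := Summable.tsum_eq_zero_add hs1
      have hf0 : (F (j+1) 0 : ℝ)/(n:ℝ)^0 = 0 := by
        have h0 : F (j+1) 0 = 0 := by
          have := F_init c i₀ (n := n) (j+1)
          rw [hF]
          simpa using this
        rw [h0]
        simp
      have hterm : ∀ k : ℕ, (F (j+1) (k+1) : ℝ)/(n:ℝ)^(k+1)
          = (((n-a+(j+1):ℕ):ℝ)/n) * ((F (j+1) k : ℝ)/(n:ℝ)^k)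
            + (((a-j:ℕ):ℝ)/n) * ((F j k : ℝ)/(n:ℝ)^k) := by
        intro k
        have hrec := F_succ_succ c i₀ a hS han k j
        have hcast : (F (j+1) (k+1) : ℝ)
            = ((n-a+(j+1):ℕ):ℝ) * (F (j+1) k : ℝ) + ((a-j:ℕ):ℝ) * (F j k : ℝ) := by
          rw [hF]
          exact_mod_cast hrec
        have hsplit : ∀ cc X : ℝ, (cc * X)/((n:ℝ)^k * n) = (cc/(n:ℝ)) * (X/(n:ℝ)^k) := by
          intro cc X
          rw [div_mul_div_comm, mul_comm (n:ℝ) ((n:ℝ)^k)]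
        rw [hcast, pow_succ, add_div, hsplit, hsplit]
      have hsum_eq : (∑' k : ℕ, (F (j+1) (k+1) : ℝ)/(n:ℝ)^(k+1))
          = (((n-a+(j+1):ℕ):ℝ)/n) * (∑' k, (F (j+1) k : ℝ)/(n:ℝ)^k)
            + (((a-j:ℕ):ℝ)/n) * (∑' k, (F j k : ℝ)/(n:ℝ)^k) := by
        rw [tsum_congr hterm, Summable.tsum_add (hs1.mul_left _) (hs0.mul_left _),
          tsum_mul_left, tsum_mul_left]
      rw [hf0, zero_add, hsum_eq, huj] at hshift
      set u := ∑' k, (F (j+1) k : ℝ)/(n:ℝ)^k with hudef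
      have hc1 : ((n-a+(j+1):ℕ):ℝ) = (n:ℝ) - a + (j+1) := by
        push_cast [Nat.cast_sub han]
        ring
      have hc2 : ((a-j:ℕ):ℝ) = (a:ℝ) - j := by
        push_cast [Nat.cast_sub (le_of_lt hj)]
        ring
      have haj : (0:ℝ) < (a:ℝ) - j := by
        have : (j:ℝ) < a := by exact_mod_cast hj
        linarith
      have haj1 : (0:ℝ) < (a:ℝ) - (j+1) := by
        have : ((j+1:ℕ):ℝ) < a := by exact_mod_cast hj1
        push_cast at this
        linarith
      rw [hc1, hc2] at hshift
      have hgoal : u = (n:ℝ) / ((a:ℝ) - (j+1)) := by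
        rw [eq_div_iff (ne_of_gt haj1)]
        field_simp at hshift
        nlinarith [hshift]
      rw [hgoal]
      push_cast
      ring
  -- reduce Nat.card to sums of F
  have hcardB : ∀ k : ℕ, (Nat.card {f : Fin k → Fin n // ∀ i : Fin m,
      ((Finset.image f Finset.univ).filter (fun b : Fin n => c b = i)).card ≤ r - 1})
      = ∑ j ∈ range r, F j k := by
    intro k
    rw [Nat.card_eq_fintype_card, Fintype.card_subtype]
    have h1 : Finset.univ.filter (fun f : Fin k → Fin n => ∀ i : Fin m,
        ((Finset.image f Finset.univ).filter (fun b : Fin n => c b = i)).card ≤ r - 1)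
        = Finset.univ.filter (fun f : Fin k → Fin n =>
          ((Finset.image f Finset.univ).filter (fun b : Fin n => c b = i₀)).card ≤ r - 1) := by
      ext f
      simp only [Finset.mem_filter, Finset.mem_univ, true_and]
      constructor
      · intro h; exact h i₀
      · intro h i
        by_cases hi : i = i₀
        · rw [hi]; exact h
        · have h1 := Finset.card_le_card
            (Finset.filter_subset_filter (fun b : Fin n => c b = i)
              (Finset.subset_univ (Finset.image f Finset.univ)))
          have h2 := hx i
          have h3 := hsmall i hi
          omega
    rw [h1, filter_card_le_eq_sum _
      (fun f : Fin k → Fin n =>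
        ((Finset.image f Finset.univ).filter (fun b : Fin n => c b = i₀)).card) (r-1)]
    rw [show r-1+1 = r by omega]
  have hterm : ∀ k : ℕ, ((Nat.card {f : Fin k → Fin n // ∀ i : Fin m,
      ((Finset.image f Finset.univ).filter (fun b : Fin n => c b = i)).card ≤ r - 1} : ℝ)
        / (n ^ k : ℝ))
      = ∑ j ∈ range r, (F j k : ℝ)/(n:ℝ)^k := by
    intro k
    rw [hcardB k]
    push_cast
    rw [Finset.sum_div]
  rw [tsum_congr hterm, Summable.tsum_finsetSum (fun j hj => hsummable j (by
    have := Finset.mem_range.1 hj; omega))]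
  rw [Finset.sum_congr rfl (fun j hj => hu j (by
    have := Finset.mem_range.1 hj; omega)), Finset.mul_sum]
  apply Finset.sum_congr rfl
  intro j _
  rw [mul_one_div]

/-- If exactly one colour `i₀` has preimage size `x i₀ = a ≥ r` (all others `< r`), then
`E(K_r^{(1)}) = r(n+1)/(a+1)` and `E(K_r^{(2)}) = n ∑_{i=0}^{r-1} 1/(a-i)`
(expectations written as `∑_{k≥0} P(K > k)`). -/
theorem expected_collision_time_one_large_cell
    (n m r a : ℕ) (x : Fin m → ℕ) (c : Fin n → Fin m) (i₀ : Fin m)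
    (hx : ∀ i, (Finset.univ.filter (fun b : Fin n => c b = i)).card = x i)
    (hn : ∑ i, x i = n) (hr : 2 ≤ r)
    (ha : x i₀ = a) (har : r ≤ a) (hsmall : ∀ i, i ≠ i₀ → x i < r) :
    (∑' k : ℕ,
        ((Nat.card {σ : Equiv.Perm (Fin n) // ∀ i : Fin m,
            (Finset.univ.filter (fun t : Fin n => t.val < k ∧ c (σ t) = i)).card ≤ r - 1} : ℝ)
          / (Nat.factorial n : ℝ)))
      = (r : ℝ) * (n + 1) / (a + 1)
    ∧ (∑' k : ℕ,
        ((Nat.card {f : Fin k → Fin n // ∀ i : Fin m,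
            ((Finset.image f Finset.univ).filter (fun b : Fin n => c b = i)).card ≤ r - 1} : ℝ)
          / (n ^ k : ℝ)))
      = (n : ℝ) * ∑ i ∈ Finset.range r, (1 : ℝ) / ((a : ℝ) - i) := by
  exact ⟨part1 n m r a x c i₀ hx hn hr ha har hsmall,
    part2 n m r a x c i₀ hx hn hr ha har hsmall⟩
end

section
/- Let X be binomially distributed with parameters n and p, and let r < n. Then P(X < r) ≥ (1 - p^r)^{binom(n,r)}. -/
open Finset

private lemma conv_pow_aux (p : ℝ) (hp0 : 0 ≤ p) (hp1 : p ≤ 1) (b : ℕ) (x : ℝ)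
    (hx : 0 ≤ x) : ((1 - p) + p * x) ^ b ≤ (1 - p) + p * x ^ b := by
  have h := (convexOn_pow b).2 (Set.mem_Ici.2 (zero_le_one)) (Set.mem_Ici.2 hx)
    (sub_nonneg.2 hp1) hp0 (by ring)
  simpa using h

private lemma binom_tail_aux (p : ℝ) (hp0 : 0 ≤ p) (hp1 : p ≤ 1) :
    ∀ n r : ℕ, (1 - p ^ r) ^ (Nat.choose n r)
      ≤ ∑ i ∈ Finset.range r, (Nat.choose n i : ℝ) * p ^ i * (1 - p) ^ (n - i) := by
  have hq0 : (0:ℝ) ≤ 1 - p := sub_nonneg.2 hp1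
  intro n
  induction n with
  | zero =>
    intro r
    cases r with
    | zero => simp
    | succ s =>
      rw [Nat.choose_eq_zero_of_lt (Nat.succ_pos s), pow_zero]
      rw [Finset.sum_eq_single 0]
      · simp
      · intro b _ hb
        rw [Nat.choose_eq_zero_of_lt (Nat.pos_of_ne_zero hb)]
        simp
      · simp
  | succ n ih =>
    intro r
    cases r with
    | zero => simp
    | succ s =>
      have hterm : ∀ j : ℕ, (((n+1).choose (j+1) : ℝ)) * p^(j+1) * (1-p)^(n+1-(j+1))
          = (1-p) * (((n.choose (j+1)):ℝ) * p^(j+1) * (1-p)^(n-(j+1)))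
            + p * (((n.choose j):ℝ) * p^j * (1-p)^(n-j)) := by
        intro j
        rcases le_or_gt (j+1) n with h | h
        · have h1 : n + 1 - (j+1) = n - j := by omega
          have h2 : n - j = (n - (j+1)) + 1 := by omega
          rw [h1, Nat.choose_succ_succ, h2]
          push_cast
          ring
        · have hc0 : n.choose (j+1) = 0 := Nat.choose_eq_zero_of_lt h
          have hc1 : (n+1).choose (j+1) = n.choose j + n.choose (j+1) :=
            Nat.choose_succ_succ n j
          have h1 : n + 1 - (j+1) = n - j := by omega
          rw [h1, hc1, hc0]
          push_cast
          ring
      have hrec : ∑ i ∈ Finset.range (s+1), (((n+1).choose i : ℝ)) * p ^ i * (1-p) ^ (n+1-i)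
          = (1-p) * ∑ i ∈ Finset.range (s+1), ((n.choose i : ℝ)) * p ^ i * (1-p) ^ (n-i)
            + p * ∑ i ∈ Finset.range s, ((n.choose i : ℝ)) * p ^ i * (1-p) ^ (n-i) := by
        rw [Finset.sum_range_succ' (fun i => (((n+1).choose i : ℝ)) * p ^ i * (1-p) ^ (n+1-i)),
          Finset.sum_range_succ' (fun i => ((n.choose i : ℝ)) * p ^ i * (1-p) ^ (n-i))]
        have h1 : ∑ k ∈ Finset.range s, (((n+1).choose (k+1) : ℝ)) * p ^ (k+1) * (1-p) ^ (n+1-(k+1))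
            = ∑ k ∈ Finset.range s, ((1-p) * (((n.choose (k+1)):ℝ) * p^(k+1) * (1-p)^(n-(k+1)))
              + p * (((n.choose k):ℝ) * p^k * (1-p)^(n-k))) :=
          Finset.sum_congr rfl fun j _ => hterm j
        rw [h1, Finset.sum_add_distrib, ← Finset.mul_sum, ← Finset.mul_sum]
        simp only [Nat.choose_zero_right, Nat.cast_one, Nat.sub_zero, pow_zero,
          Nat.add_sub_cancel]
        ring
      rw [hrec]
      -- now the inequality
      have hps : p ^ s ≤ 1 := pow_le_one₀ hp0 hp1
      have hps1 : p ^ (s+1) ≤ 1 := pow_le_one₀ hp0 hp1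
      have hu0 : (0:ℝ) ≤ 1 - p ^ (s+1) := sub_nonneg.2 hps1
      have hu1 : 1 - p ^ (s+1) ≤ 1 := by
        have : (0:ℝ) ≤ p ^ (s+1) := pow_nonneg hp0 _
        linarith
      have hv0 : (0:ℝ) ≤ 1 - p ^ s := sub_nonneg.2 hps
      set a := n.choose (s+1)
      set b := n.choose s
      have hexp : (n+1).choose (s+1) = b + a := Nat.choose_succ_succ n s
      rw [hexp, pow_add]
      have hua0 : (0:ℝ) ≤ (1 - p ^ (s+1)) ^ a := pow_nonneg hu0 _
      have hua1 : (1 - p ^ (s+1)) ^ a ≤ 1 := pow_le_one₀ hu0 hu1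
      have hvb0 : (0:ℝ) ≤ (1 - p ^ s) ^ b := pow_nonneg hv0 _
      have hconv : (1 - p ^ (s+1)) ^ b ≤ (1-p) + p * (1 - p ^ s) ^ b := by
        have h := conv_pow_aux p hp0 hp1 b (1 - p ^ s) hv0
        have he : (1-p) + p * (1 - p ^ s) = 1 - p ^ (s+1) := by ring
        rwa [he] at h
      calc (1 - p ^ (s+1)) ^ b * (1 - p ^ (s+1)) ^ a
          ≤ ((1-p) + p * (1 - p ^ s) ^ b) * (1 - p ^ (s+1)) ^ a := by
            apply mul_le_mul_of_nonneg_right hconv hua0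
        _ = (1-p) * (1 - p ^ (s+1)) ^ a + p * ((1 - p ^ s) ^ b * (1 - p ^ (s+1)) ^ a) := by
            ring
        _ ≤ (1-p) * (1 - p ^ (s+1)) ^ a + p * (1 - p ^ s) ^ b := by
            have : (1 - p ^ s) ^ b * (1 - p ^ (s+1)) ^ a ≤ (1 - p ^ s) ^ b * 1 :=
              mul_le_mul_of_nonneg_left hua1 hvb0
            nlinarith
        _ ≤ (1-p) * (∑ i ∈ Finset.range (s+1), ((n.choose i : ℝ)) * p ^ i * (1-p) ^ (n-i))
              + p * (∑ i ∈ Finset.range s, ((n.choose i : ℝ)) * p ^ i * (1-p) ^ (n-i)) := by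
            exact add_le_add (mul_le_mul_of_nonneg_left (ih (s+1)) hq0)
              (mul_le_mul_of_nonneg_left (ih s) hp0)

/-- For `X ~ Binomial(n,p)` and `r < n`: `P(X < r) ≥ (1 - p^r)^{binom(n,r)}`. -/
theorem binomial_tail_lower_bound (n r : ℕ) (p : ℝ) (hp0 : 0 ≤ p) (hp1 : p ≤ 1)
    (hr : r < n) :
    (1 - p ^ r) ^ (Nat.choose n r)
      ≤ ∑ i ∈ Finset.range r, (Nat.choose n i : ℝ) * p ^ i * (1 - p) ^ (n - i) := by
  exact binom_tail_aux p hp0 hp1 n r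
end

section
/- For all s ≥ 0 and integers n > r ≥ 1: -log G_r(n, 1-e^{-s}) ≤ binom(n,r) s^r, i.e. G_r(n, 1-e^{-s}) ≥ exp(-binom(n,r) s^r), where G_r(n,t) = sum_{i=0}^{r-1} binom(n,i) t^i (1-t)^{n-i}. -/
open Finset

/-- `G_r(n,t) = ∑_{i=0}^{r-1} binom(n,i) t^i (1-t)^{n-i}`. -/
noncomputable def Gr (r n : ℕ) (t : ℝ) : ℝ :=
  ∑ i ∈ Finset.range r, (Nat.choose n i : ℝ) * t ^ i * (1 - t) ^ (n - i)

lemma pow_le_Gr (r n : ℕ) (hr : 1 ≤ r) (hn : r ≤ n) (t : ℝ) (h0 : 0 ≤ t) (h1 : t ≤ 1) :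
    (1 - t) ^ (n - r + 1) ≤ Gr r n t := by
  have h1t : 0 ≤ 1 - t := by linarith
  have key : (1 - t) ^ (n - r + 1) =
      ∑ i ∈ Finset.range r, (Nat.choose (r-1) i : ℝ) * t ^ i * (1 - t) ^ (n - i) := by
    have hb : (t + (1 - t)) ^ (r - 1) = ∑ i ∈ Finset.range r,
        t ^ i * (1 - t) ^ (r - 1 - i) * (Nat.choose (r-1) i : ℝ) := by
      have hr1 : r - 1 + 1 = r := Nat.succ_pred_eq_of_pos hr
      rw [add_pow, hr1]
    have : (1 - t) ^ (n - r + 1) = (t + (1-t))^(r-1) * (1 - t) ^ (n - r + 1) := by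
      simp
    rw [this, hb, Finset.sum_mul]
    apply Finset.sum_congr rfl
    intro i hi
    simp only [Finset.mem_range] at hi
    rw [show n - i = (r-1-i)+(n-r+1) by omega, pow_add]
    ring
  rw [key]
  apply Finset.sum_le_sum
  intro i hi
  have : (Nat.choose (r-1) i : ℝ) ≤ (Nat.choose n i : ℝ) := by
    exact_mod_cast Nat.choose_le_choose i (by omega)
  have hnn : 0 ≤ t ^ i * (1 - t) ^ (n - i) := by positivity
  calc (Nat.choose (r-1) i : ℝ) * t ^ i * (1 - t) ^ (n - i)
      = (Nat.choose (r-1) i : ℝ) * (t ^ i * (1 - t) ^ (n - i)) := by ring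
    _ ≤ (Nat.choose n i : ℝ) * (t ^ i * (1 - t) ^ (n - i)) := by
        apply mul_le_mul_of_nonneg_right this hnn
    _ = (Nat.choose n i : ℝ) * t ^ i * (1 - t) ^ (n - i) := by ring

lemma choose_cast_id (n j : ℕ) (h : j < n) :
    (Nat.choose n (j+1) : ℝ) * ((j:ℝ)+1) = (Nat.choose n j : ℝ) * ((n:ℝ) - j) := by
  have h1 := Nat.choose_succ_right_eq n j
  have h2 : ((n.choose (j+1) * (j+1) : ℕ) : ℝ) = ((n.choose j * (n - j) : ℕ) : ℝ) := by
    exact_mod_cast congrArg (Nat.cast : ℕ → ℝ) h1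
  push_cast [Nat.cast_sub (le_of_lt h)] at h2
  linarith

lemma Gr_hasDerivAt (r n : ℕ) (hr : 1 ≤ r) (hn : r < n) (t : ℝ) :
    HasDerivAt (Gr r n)
      (-((r : ℝ) * (Nat.choose n r : ℝ) * t ^ (r-1) * (1-t) ^ (n-r))) t := by
  set D : ℕ → ℝ := fun j => (Nat.choose n j : ℝ) * ((n : ℝ) - j) * t ^ j * (1-t) ^ (n-j-1) with hD
  set E : ℕ → ℝ := fun i => match i with | 0 => 0 | j+1 => D j with hE
  have hsum : HasDerivAt (Gr r n) (∑ i ∈ Finset.range r, (E i - E (i+1))) t := by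
    apply HasDerivAt.fun_sum
    intro i hi
    simp only [Finset.mem_range] at hi
    have hin : i < n := lt_of_lt_of_le hi (le_of_lt hn)
    have h1 : HasDerivAt (fun x : ℝ => x ^ i) ((i : ℝ) * t ^ (i-1)) t := hasDerivAt_pow i t
    have h2 : HasDerivAt (fun x : ℝ => (1 - x) ^ (n-i))
        (((n-i : ℕ) : ℝ) * (1-t) ^ (n-i-1) * (-1)) t := by
      exact (hasDerivAt_pow (n-i) (1-t)).comp t ((hasDerivAt_id t).const_sub 1)
    have h3 := ((h1.mul h2).const_mul (Nat.choose n i : ℝ))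
    convert h3 using 1
    · rfl
    · ext x; simp only [Pi.mul_apply]; ring
    · show E i - E (i+1) = _
      match i, hin with
      | 0, _ =>
        simp only [hE, hD]
        push_cast [Nat.cast_sub (le_of_lt hin)]
        simp
      | j+1, hjn =>
        simp only [hE, hD]
        have hc := choose_cast_id n j (by omega)
        have e1 : n - (j+1) - 1 = n - j - 2 := by omega
        have e2 : n - j - 1 = n - (j+1) := by omega
        push_cast [Nat.cast_sub (le_of_lt hjn)]
        rw [e1, e2]
        try simp only [Nat.add_sub_cancel]
        linear_combination (-(t^j * (1-t)^(n-(j+1)))) * hc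
  have htel : (∑ i ∈ Finset.range r, (E i - E (i+1))) = E 0 - E r := Finset.sum_range_sub' E r
  rw [htel] at hsum
  convert hsum using 1
  match r, hr, hn with
  | j+1, _, hjn =>
    simp only [hE, hD]
    have hc := choose_cast_id n j (by omega)
    have e2 : n - j - 1 = n - (j+1) := by omega
    rw [e2]
    push_cast
    try simp only [Nat.add_sub_cancel]
    linear_combination (-(t^j * (1-t)^(n-(j+1)))) * hc

lemma Gr_zero (r n : ℕ) (hr : 1 ≤ r) : Gr r n 0 = 1 := by
  unfold Gr
  rw [Finset.sum_eq_single_of_mem 0 (Finset.mem_range.mpr hr)]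
  · simp
  · intro i _ hi
    simp [zero_pow hi]

/-- For `s ≥ 0` and `n > r ≥ 1`:
`-log G_r(n, 1-e^{-s}) ≤ binom(n,r) s^r`, i.e.
`G_r(n, 1-e^{-s}) ≥ exp(-binom(n,r) s^r)`. -/
theorem neg_log_Gr_le (n r : ℕ) (hr : 1 ≤ r) (hn : r < n) (s : ℝ) (hs : 0 ≤ s) :
    -Real.log (Gr r n (1 - Real.exp (-s))) ≤ (Nat.choose n r : ℝ) * s ^ r
    ∧ Real.exp (-(Nat.choose n r : ℝ) * s ^ r) ≤ Gr r n (1 - Real.exp (-s)) := by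
  set C : ℝ := (Nat.choose n r : ℝ) with hCdef
  set g : ℝ → ℝ := fun x => Gr r n (1 - Real.exp (-x)) with hg
  set H : ℝ → ℝ := fun x => g x * Real.exp (C * x ^ r) with hH
  set Hd : ℝ → ℝ := fun x =>
    (-((r:ℝ) * C * (1 - Real.exp (-x)) ^ (r-1) * (Real.exp (-x)) ^ (n-r)) * Real.exp (-x))
      * Real.exp (C * x ^ r)
    + g x * (Real.exp (C * x ^ r) * (C * ((r:ℝ) * x ^ (r-1)))) with hHdd
  have hgd : ∀ x : ℝ, HasDerivAt g
      (-((r:ℝ) * C * (1 - Real.exp (-x)) ^ (r-1) * (Real.exp (-x)) ^ (n-r)) * Real.exp (-x)) x := by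
    intro x
    have ht : HasDerivAt (fun x : ℝ => 1 - Real.exp (-x)) (Real.exp (-x)) x := by
      have h1 : HasDerivAt (fun x : ℝ => Real.exp (-x)) (Real.exp (-x) * (-1)) x :=
        (Real.hasDerivAt_exp (-x)).comp x ((hasDerivAt_id x).neg)
      have h2 := h1.const_sub 1
      exact h2.congr_deriv (by ring)
    have h3 := (Gr_hasDerivAt r n hr hn (1 - Real.exp (-x))).comp x ht
    refine h3.congr_deriv ?_
    rw [sub_sub_cancel]
  have hHd : ∀ x : ℝ, HasDerivAt H (Hd x) x := by
    intro x
    have hexp : HasDerivAt (fun x : ℝ => Real.exp (C * x ^ r))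
        (Real.exp (C * x ^ r) * (C * ((r:ℝ) * x ^ (r-1)))) x :=
      (Real.hasDerivAt_exp _).comp x ((hasDerivAt_pow r x).const_mul C)
    exact (hgd x).mul hexp
  have hC : 0 < C := by
    rw [hCdef]
    exact_mod_cast Nat.choose_pos (le_of_lt hn)
  have hHd_nonneg : ∀ x : ℝ, 0 ≤ x → 0 ≤ Hd x := by
    intro x hx
    have he1 : Real.exp (-x) ≤ 1 := Real.exp_le_one_iff.mpr (by linarith)
    have he0 : 0 < Real.exp (-x) := Real.exp_pos _
    set t : ℝ := 1 - Real.exp (-x) with htdef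
    have ht0 : 0 ≤ t := by simp [htdef]; linarith
    have ht1 : t ≤ 1 := by simp [htdef]; linarith
    have hts : t ≤ x := by
      have := Real.add_one_le_exp (-x)
      simp [htdef]; linarith
    have htp : t ^ (r-1) ≤ x ^ (r-1) := pow_le_pow_left₀ ht0 hts _
    have hgl : (1 - t) ^ (n - r + 1) ≤ g x := pow_le_Gr r n hr (le_of_lt hn) t ht0 ht1
    have hmain : (r:ℝ) * C * t ^ (r-1) * (Real.exp (-x)) ^ (n-r) * Real.exp (-x)
        ≤ g x * (C * ((r:ℝ) * x ^ (r-1))) := by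
      have hee : (Real.exp (-x)) ^ (n-r) * Real.exp (-x) = (1 - t) ^ (n - r + 1) := by
        simp [htdef, pow_succ]
      calc (r:ℝ) * C * t ^ (r-1) * (Real.exp (-x)) ^ (n-r) * Real.exp (-x)
          = ((r:ℝ) * C) * (t ^ (r-1) * ((1 - t) ^ (n - r + 1))) := by rw [← hee]; ring
        _ ≤ ((r:ℝ) * C) * (x ^ (r-1) * g x) := by
            apply mul_le_mul_of_nonneg_left _ (by positivity)
            apply mul_le_mul htp hgl (pow_nonneg (by linarith) _) (pow_nonneg hx _)
        _ = g x * (C * ((r:ℝ) * x ^ (r-1))) := by ring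
    have hep : 0 < Real.exp (C * x ^ r) := Real.exp_pos _
    have : 0 ≤ (g x * (C * ((r:ℝ) * x ^ (r-1)))
        - (r:ℝ) * C * t ^ (r-1) * (Real.exp (-x)) ^ (n-r) * Real.exp (-x)) * Real.exp (C * x ^ r) := by
      apply mul_nonneg (by linarith) (le_of_lt hep)
    simp only [hHdd]
    nlinarith [this]
  have hmono : MonotoneOn H (Set.Ici (0:ℝ)) := by
    apply monotoneOn_of_deriv_nonneg (convex_Ici 0)
    · exact (Differentiable.continuous (fun x => (hHd x).differentiableAt)).continuousOn
    · intro x _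
      exact (hHd x).differentiableAt.differentiableWithinAt
    · intro x hx
      rw [interior_Ici] at hx
      rw [(hHd x).deriv]
      exact hHd_nonneg x (le_of_lt hx)
  have hH0 : H 0 = 1 := by
    simp only [hH, hg]
    rw [zero_pow (by omega : r ≠ 0)]
    simp [Gr_zero r n hr]
  have hHs : 1 ≤ H s := by
    rw [← hH0]
    exact hmono (Set.mem_Ici.mpr (le_refl 0)) hs hs
  have hgs : Real.exp (-(C * s ^ r)) ≤ g s := by
    rw [Real.exp_neg]
    have hep : 0 < Real.exp (C * s ^ r) := Real.exp_pos _
    rw [inv_eq_one_div, div_le_iff₀ hep]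
    exact hHs
  constructor
  · have hlog := Real.log_le_log (Real.exp_pos _) hgs
    rw [Real.log_exp] at hlog
    simp only [hg] at hgs
    linarith [hlog]
  · have : -(C) * s ^ r = -(C * s ^ r) := by ring
    rw [this]
    exact hgs
end
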